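/- arXiv:2605.00213 — 5 statements merged into one kernel-verified Lean document; each statement's English description precedes it below -/
import Mathlib

section
/- Let α ∈ (0,1), let β ∈ 𝔻, and let φ_β be the disk automorphism φ_β(w) = (β − w)/(1 − β̄w). Then D_{φ_β} is not bounded on D_α; that is, there is no constant C > 0 such that every f ∈ D_α satisfies f′∘φ_β ∈ D_α with ‖f′∘φ_β‖_{D_α} ≤ C‖f‖_{D_α}. -/
open Complex MeasureTheory Metric Set ENNReal

noncomputable section

/-- The open unit disk in the complex plane. -/
def unitDisc : Set ℂ := {z : ℂ | ‖z‖ < 1}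

-- The order of vanishing (multiplicity) of `φ - w` at the point `z`.
open scoped Classical in
def vanishingOrder (φ : ℂ → ℂ) (w z : ℂ) : ℕ∞ :=
  if h : AnalyticAt ℂ (fun ζ => φ ζ - w) z then analyticOrderAt (fun ζ => φ ζ - w) z else 0

/-- The generalized Nevanlinna counting function `N_{φ,α}(w)`, counting preimages
with multiplicity, valued in `ℝ≥0∞`. -/
def nevanlinna (α : ℝ) (φ : ℂ → ℂ) (w : ℂ) : ℝ≥0∞ :=
  ∑' z : unitDisc, (vanishingOrder φ w z : ℝ≥0∞) * ENNReal.ofReal ((1 - ‖(z : ℂ)‖ ^ 2) ^ α)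

/-- `a` is the sequence of Taylor coefficients of `f` on the unit disc, and the corresponding
weighted Dirichlet norm is finite, i.e. `f ∈ D_α` with coefficient sequence `a`. -/
def InDirichlet (α : ℝ) (f : ℂ → ℂ) (a : ℕ → ℂ) : Prop :=
  (∀ z ∈ unitDisc, HasSum (fun n : ℕ => a n * z ^ n) (f z)) ∧
    Summable (fun n : ℕ => ((n : ℝ) + 1) ^ (1 - α) * ‖a n‖ ^ 2)

/-- The squared `D_α` norm of a coefficient sequence. -/
def dirichletNormSq (α : ℝ) (a : ℕ → ℂ) : ℝ :=
  ∑' n : ℕ, ((n : ℝ) + 1) ^ (1 - α) * ‖a n‖ ^ 2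

/-- The composition-differentiation operator `D_φ f = f' ∘ φ` is bounded on `D_α`. -/
def DphiBounded (α : ℝ) (φ : ℂ → ℂ) : Prop :=
  ∃ C > 0, ∀ f : ℂ → ℂ, ∀ a : ℕ → ℂ, InDirichlet α f a →
    ∃ b : ℕ → ℂ, InDirichlet α (fun z => deriv f (φ z)) b ∧
      Real.sqrt (dirichletNormSq α b) ≤ C * Real.sqrt (dirichletNormSq α a)

/-- The weighted counting measure `μ_α = ∑ (n+1)^{1-α} δ_n` on `ℕ`. -/
def dirMeasure (α : ℝ) : Measure ℕ :=
  Measure.sum fun n : ℕ => (((n : ℝ≥0∞) + 1) ^ (1 - α)) • Measure.dirac n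

/-- A bounded operator `T` on `H_α = L²(ℕ, μ_α)` represents `D_φ` if for every `a ∈ H_α`,
with `f(z) = ∑ aₙ zⁿ`, the sequence `T a` is the Taylor coefficient sequence of `f' ∘ φ`,
i.e. `∑ (T a)ₙ zⁿ` converges to `(f' ∘ φ)(z)` on the disc. -/
def Represents (α : ℝ) (φ : ℂ → ℂ)
    (T : Lp ℂ 2 (dirMeasure α) →L[ℂ] Lp ℂ 2 (dirMeasure α)) : Prop :=
  ∀ a : Lp ℂ 2 (dirMeasure α), ∀ z ∈ unitDisc,
    HasSum (fun n => (T a : ℕ → ℂ) n * z ^ n)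
      (deriv (fun ζ => ∑' n : ℕ, (a : ℕ → ℂ) n * ζ ^ n) (φ z))

/-- The essential norm of a bounded operator: distance to the compact operators. -/
def essNorm {H : Type*} [NormedAddCommGroup H] [NormedSpace ℂ H]
    (T : H →L[ℂ] H) : ℝ :=
  sInf {c : ℝ | ∃ K : H →L[ℂ] H, IsCompactOperator ⇑K ∧ c = ‖T - K‖}

namespace DphiAux

lemma normSq_identity (β z : ℂ) :
    Complex.normSq (1 - (starRingEnd ℂ) β * z) - Complex.normSq (β - z)
      = (1 - Complex.normSq β) * (1 - Complex.normSq z) := by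
  simp only [Complex.normSq_apply, Complex.sub_re, Complex.sub_im, Complex.mul_re,
    Complex.mul_im, Complex.one_re, Complex.one_im, Complex.conj_re, Complex.conj_im]
  ring

lemma norm_identity (β z : ℂ) :
    ‖1 - (starRingEnd ℂ) β * z‖ ^ 2 - ‖β - z‖ ^ 2 = (1 - ‖β‖ ^ 2) * (1 - ‖z‖ ^ 2) := by
  have h := normSq_identity β z
  simpa only [← Complex.sq_norm] using h

lemma denom_ne {β z : ℂ} (hβ : ‖β‖ < 1) (hz : ‖z‖ < 1) :
    (1 : ℂ) - (starRingEnd ℂ) β * z ≠ 0 := by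
  intro h
  have h1 : (starRingEnd ℂ) β * z = 1 := by linear_combination -h
  have h2 : ‖(starRingEnd ℂ) β * z‖ < 1 := by
    rw [norm_mul, RingHomIsometric.norm_map]
    nlinarith [norm_nonneg β, norm_nonneg z]
  rw [h1, norm_one] at h2
  exact lt_irrefl 1 h2

lemma phi_mem {β z : ℂ} (hβ : ‖β‖ < 1) (hz : ‖z‖ < 1) :
    ‖(β - z) / (1 - (starRingEnd ℂ) β * z)‖ < 1 := by
  have hd := denom_ne hβ hz
  have hdpos : 0 < ‖(1:ℂ) - (starRingEnd ℂ) β * z‖ := norm_pos_iff.2 hd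
  rw [norm_div, div_lt_one hdpos]
  have h := norm_identity β z
  have hb2 : (0:ℝ) < 1 - ‖β‖ ^ 2 := by nlinarith [norm_nonneg β]
  have hz2 : (0:ℝ) < 1 - ‖z‖ ^ 2 := by nlinarith [norm_nonneg z]
  have h2 : ‖β - z‖ ^ 2 < ‖1 - (starRingEnd ℂ) β * z‖ ^ 2 := by nlinarith [mul_pos hb2 hz2]
  exact lt_of_pow_lt_pow_left₀ 2 (norm_nonneg _) h2

lemma one_sub_phi {β z : ℂ} (hβ : ‖β‖ < 1) (hz : ‖z‖ < 1) :
    (1 - ‖β‖ ^ 2) * (1 - ‖z‖) ≤ 8 * (1 - ‖(β - z) / (1 - (starRingEnd ℂ) β * z)‖) := by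
  have hd := denom_ne hβ hz
  have hdpos : 0 < ‖(1:ℂ) - (starRingEnd ℂ) β * z‖ := norm_pos_iff.2 hd
  set D : ℝ := ‖(1:ℂ) - (starRingEnd ℂ) β * z‖ with hD
  set u : ℝ := ‖(β - z) / (1 - (starRingEnd ℂ) β * z)‖ with hu
  have hu0 : 0 ≤ u := norm_nonneg _
  have hu1 : u < 1 := phi_mem hβ hz
  have h1 : u * D = ‖β - z‖ := by
    rw [hu, hD, norm_div, div_mul_cancel₀ _ (ne_of_gt hdpos)]
  have h1' : (u * D) ^ 2 = ‖β - z‖ ^ 2 := by rw [h1]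
  have h := norm_identity β z
  have hkey : (1 - u ^ 2) * D ^ 2 = (1 - ‖β‖ ^ 2) * (1 - ‖z‖ ^ 2) := by
    linear_combination h - h1'
  have hD2 : D ≤ 2 := by
    calc D ≤ ‖(1:ℂ)‖ + ‖(starRingEnd ℂ) β * z‖ := norm_sub_le _ _
      _ ≤ 2 := by
        rw [norm_one, norm_mul, RingHomIsometric.norm_map]
        nlinarith [norm_nonneg β, norm_nonneg z]
  have hb2 : (0:ℝ) ≤ 1 - ‖β‖ ^ 2 := by nlinarith [norm_nonneg β]
  have e1 : (1 - ‖β‖ ^ 2) * (1 - ‖z‖) ≤ (1 - ‖β‖ ^ 2) * (1 - ‖z‖ ^ 2) := by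
    nlinarith [mul_nonneg hb2 (mul_nonneg (norm_nonneg z) (by linarith : (0:ℝ) ≤ 1 - ‖z‖))]
  have h4 : 0 ≤ (1 - u ^ 2) * (4 - D ^ 2) :=
    mul_nonneg (by nlinarith) (by nlinarith)
  have e3 : (1 - u ^ 2) * D ^ 2 ≤ (1 - u ^ 2) * 4 := by nlinarith [h4]
  have e4 : (1 - u ^ 2) * 4 ≤ 8 * (1 - u) := by nlinarith
  linarith [hkey]

lemma phi_invol {β z : ℂ} (hβ : ‖β‖ < 1) (hz : ‖z‖ < 1) :
    (β - (β - z) / (1 - (starRingEnd ℂ) β * z)) /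
      (1 - (starRingEnd ℂ) β * ((β - z) / (1 - (starRingEnd ℂ) β * z))) = z := by
  have hD : (1 : ℂ) - (starRingEnd ℂ) β * z ≠ 0 := denom_ne hβ hz
  have h2 : (1 : ℂ) - (starRingEnd ℂ) β * β ≠ 0 := by
    intro h
    have ha : (starRingEnd ℂ) β * β = 1 := by linear_combination -h
    have hb : ‖(starRingEnd ℂ) β * β‖ < 1 := by
      rw [norm_mul, RingHomIsometric.norm_map]
      nlinarith [norm_nonneg β]
    rw [ha, norm_one] at hb
    exact lt_irrefl 1 hb
  set D : ℂ := 1 - (starRingEnd ℂ) β * z with hDdef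
  set w : ℂ := (β - z) / D with hwdef
  have hw : w * D = β - z := div_mul_cancel₀ _ hD
  have hE : (1 - (starRingEnd ℂ) β * w) * D = 1 - (starRingEnd ℂ) β * β := by
    rw [sub_mul, one_mul, mul_assoc, hw, hDdef]; ring
  have hE0 : (1 : ℂ) - (starRingEnd ℂ) β * w ≠ 0 := by
    intro h
    rw [h, zero_mul] at hE
    exact h2 hE.symm
  rw [div_eq_iff hE0]
  apply mul_right_cancel₀ hD
  calc (β - w) * D = β * D - (β - z) := by rw [sub_mul, hw]
    _ = z * (1 - (starRingEnd ℂ) β * β) := by rw [hDdef]; ring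
    _ = z * ((1 - (starRingEnd ℂ) β * w) * D) := by rw [hE]
    _ = z * (1 - (starRingEnd ℂ) β * w) * D := by ring

lemma exists_powerSeries_fun (a : ℕ → ℂ) (ha : ∀ n, ‖a n‖ ≤ 1) :
    ∃ f : ℂ → ℂ, (∀ z : ℂ, ‖z‖ < 1 → HasSum (fun n => a n * z ^ n) (f z)) ∧
      (∀ z : ℂ, ‖z‖ < 1 → DifferentiableAt ℂ f z) := by
  set p := FormalMultilinearSeries.ofScalars ℂ a with hp
  have hrad : 1 ≤ p.radius := by
    apply ENNReal.le_of_forall_nnreal_lt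
    intro r hr
    apply p.le_radius_of_bound 1
    intro n
    have h1 : ‖p n‖ = ‖a n‖ := FormalMultilinearSeries.ofScalars_norm ℂ a n
    rw [h1]
    have hr1 : (r : ℝ) ≤ 1 := by
      have := hr.le
      exact_mod_cast ENNReal.coe_le_coe.1 (by simpa using this)
    have h2 : (r : ℝ) ^ n ≤ 1 := pow_le_one₀ r.coe_nonneg hr1
    nlinarith [norm_nonneg (a n), ha n, pow_nonneg r.coe_nonneg n]
  have hmem : ∀ z : ℂ, ‖z‖ < 1 → z ∈ Metric.eball (0 : ℂ) p.radius := by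
    intro z hz
    rw [EMetric.mem_ball, edist_zero_right]
    refine lt_of_lt_of_le ?_ hrad
    have h2 : ‖z‖₊ < (1 : NNReal) := by
      rw [← NNReal.coe_lt_coe]
      simpa using hz
    rw [enorm_eq_nnnorm]
    exact_mod_cast h2
  refine ⟨p.sum, ?_, ?_⟩
  · intro z hz
    have h := p.hasSum (hmem z hz)
    have e : (fun n => a n * z ^ n) = fun n => p n (fun _ => z) := by
      funext n; rw [hp, FormalMultilinearSeries.ofScalars_apply_eq, smul_eq_mul]
    rw [e]; exact h
  · intro z hz
    have hball := p.hasFPowerSeriesOnBall (lt_of_lt_of_le zero_lt_one hrad)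
    have hdo := hball.differentiableOn
    exact hdo.differentiableAt (EMetric.isOpen_ball.mem_nhds (by simpa using hmem z hz))

end DphiAux

set_option maxHeartbeats 1600000 in
/-- The composition-differentiation operator induced by the disk
automorphism `φ_β(w) = (β - w)/(1 - β̄ w)` is not bounded on `D_α`. -/
theorem Dphi_automorphism_not_bounded
    (α : ℝ) (hα : α ∈ Set.Ioo (0 : ℝ) 1) (β : ℂ) (hβ : β ∈ unitDisc) :
    ¬ DphiBounded α (fun w => (β - w) / (1 - (starRingEnd ℂ) β * w)) := by
  obtain ⟨hα0, hα1⟩ := hα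
  have hβ1 : ‖β‖ < 1 := hβ
  rintro ⟨C, -, hbdd⟩
  -- the test function `f(z) = ∑ (n+1)^{-s} zⁿ` with `s = 1 - α/4`
  set s : ℝ := 1 - α / 4 with hs
  have hs0 : 0 < s := by rw [hs]; linarith
  set a : ℕ → ℂ := fun n => (((((n : ℝ) + 1) ^ (-s) : ℝ)) : ℂ) with ha
  have hn1 : ∀ n : ℕ, (1:ℝ) ≤ (n:ℝ) + 1 := fun n => by
    have := Nat.cast_nonneg (α := ℝ) n; linarith
  have ha_norm : ∀ n, ‖a n‖ = ((n:ℝ) + 1) ^ (-s) := by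
    intro n
    rw [ha]
    rw [Complex.norm_real, Real.norm_eq_abs,
      _root_.abs_of_nonneg (Real.rpow_nonneg (by linarith [hn1 n]) _)]
  have ha1 : ∀ n, ‖a n‖ ≤ 1 := by
    intro n
    rw [ha_norm]
    exact Real.rpow_le_one_of_one_le_of_nonpos (hn1 n) (by linarith)
  obtain ⟨f, hfsum, hfdiff⟩ := DphiAux.exists_powerSeries_fun a ha1
  -- `f ∈ D_α`
  have hsummand : ∀ n : ℕ, ((n:ℝ)+1) ^ (1-α) * ‖a n‖ ^ 2 = ((n:ℝ)+1) ^ (-1 - α/2) := by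
    intro n
    have hpos : (0:ℝ) < (n:ℝ) + 1 := by linarith [hn1 n]
    rw [ha_norm, ← Real.rpow_natCast (((n:ℝ)+1) ^ (-s)) 2, ← Real.rpow_mul hpos.le,
      ← Real.rpow_add hpos]
    congr 1
    rw [hs]; push_cast; ring
  have hsa : Summable (fun n : ℕ => ((n:ℝ)+1) ^ (1-α) * ‖a n‖ ^ 2) := by
    rw [summable_congr hsummand]
    have h1 : Summable (fun n : ℕ => (n:ℝ) ^ (-1 - α/2)) :=
      Real.summable_nat_rpow.2 (by linarith)
    have h2 := (summable_nat_add_iff 1).2 h1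
    refine h2.congr ?_
    intro n
    push_cast
    ring_nf
  obtain ⟨b, hbIn, -⟩ := hbdd f a ⟨fun z hz => hfsum z hz, hsa⟩
  obtain ⟨hbsum, hbS⟩ := hbIn
  set S : ℝ := dirichletNormSq α b with hS
  have hS0 : 0 ≤ S := tsum_nonneg (fun n => by positivity)
  have hb_le : ∀ n, ‖b n‖ ≤ Real.sqrt S := by
    intro n
    apply Real.le_sqrt_of_sq_le
    have h1 : ((n:ℝ)+1) ^ (1-α) * ‖b n‖ ^ 2 ≤ S :=
      hbS.le_tsum n (fun m _ => by positivity)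
    have h2 : (1:ℝ) ≤ ((n:ℝ)+1) ^ (1-α) := Real.one_le_rpow (hn1 n) (by linarith)
    nlinarith [sq_nonneg ‖b n‖]
  have hβ2 : (0:ℝ) < 1 - ‖β‖ ^ 2 := by nlinarith [norm_nonneg β]
  set A : ℝ := 8 * Real.sqrt S / (1 - ‖β‖ ^ 2) with hA
  have hA0 : 0 ≤ A := div_nonneg (by positivity) hβ2.le
  -- the growth bound for `f'` on `[0,1)`
  have hDbound : ∀ x : ℝ, 0 ≤ x → x < 1 → ‖deriv f ((x:ℝ):ℂ)‖ ≤ A / (1 - x) := by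
    intro x hx0 hx1
    have hxd : ‖((x:ℝ):ℂ)‖ < 1 := by
      rw [Complex.norm_real, Real.norm_eq_abs, _root_.abs_of_nonneg hx0]; exact hx1
    set w : ℂ := (β - ((x:ℝ):ℂ)) / (1 - (starRingEnd ℂ) β * ((x:ℝ):ℂ)) with hw
    have hwlt : ‖w‖ < 1 := DphiAux.phi_mem hβ1 hxd
    have hphi : (β - w) / (1 - (starRingEnd ℂ) β * w) = ((x:ℝ):ℂ) :=
      DphiAux.phi_invol hβ1 hxd
    have hsum : HasSum (fun n : ℕ => b n * w ^ n) (deriv f ((x:ℝ):ℂ)) := by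
      have h := hbsum w hwlt
      simpa [hphi] using h
    have hnorm_le : ∀ n : ℕ, ‖b n * w ^ n‖ ≤ Real.sqrt S * ‖w‖ ^ n := by
      intro n
      rw [norm_mul, norm_pow]
      exact mul_le_mul_of_nonneg_right (hb_le n) (by positivity)
    have hgs : Summable (fun n : ℕ => Real.sqrt S * ‖w‖ ^ n) :=
      (summable_geometric_of_lt_one (norm_nonneg w) hwlt).mul_left _
    have hsn : Summable (fun n : ℕ => ‖b n * w ^ n‖) :=
      Summable.of_nonneg_of_le (fun n => norm_nonneg _) hnorm_le hgs
    have h1 : ‖deriv f ((x:ℝ):ℂ)‖ ≤ ∑' n : ℕ, ‖b n * w ^ n‖ := by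
      rw [← hsum.tsum_eq]
      exact norm_tsum_le_tsum_norm hsn
    have h2 : ∑' n : ℕ, ‖b n * w ^ n‖ ≤ ∑' n : ℕ, Real.sqrt S * ‖w‖ ^ n :=
      Summable.tsum_le_tsum hnorm_le hsn hgs
    have h3 : ∑' n : ℕ, Real.sqrt S * ‖w‖ ^ n = Real.sqrt S * (1 - ‖w‖)⁻¹ := by
      rw [tsum_mul_left, tsum_geometric_of_lt_one (norm_nonneg w) hwlt]
    have hwpos : 0 < 1 - ‖w‖ := by linarith
    have hxpos : 0 < 1 - x := by linarith
    have hkey : (1 - ‖β‖ ^ 2) * (1 - x) ≤ 8 * (1 - ‖w‖) := by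
      have h := DphiAux.one_sub_phi hβ1 hxd
      rw [Complex.norm_real, Real.norm_eq_abs, _root_.abs_of_nonneg hx0] at h
      exact h
    have h4 : Real.sqrt S / (1 - ‖w‖) ≤ A / (1 - x) := by
      have hprod : (0:ℝ) < (1 - ‖β‖ ^ 2) * (1 - x) := mul_pos hβ2 hxpos
      rw [hA, div_div, div_le_div_iff₀ hwpos hprod]
      nlinarith [mul_le_mul_of_nonneg_left hkey (Real.sqrt_nonneg S)]
    calc ‖deriv f ((x:ℝ):ℂ)‖ ≤ ∑' n : ℕ, ‖b n * w ^ n‖ := h1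
      _ ≤ ∑' n : ℕ, Real.sqrt S * ‖w‖ ^ n := h2
      _ = Real.sqrt S * (1 - ‖w‖)⁻¹ := h3
      _ = Real.sqrt S / (1 - ‖w‖) := by rw [div_eq_mul_inv]
      _ ≤ A / (1 - x) := h4
  -- the real restriction
  set F : ℝ → ℝ := fun x => (f ((x:ℝ):ℂ)).re with hF
  have hFd : ∀ x : ℝ, |x| < 1 → HasDerivAt F (deriv f ((x:ℝ):ℂ)).re x := by
    intro x hx
    have hdx : DifferentiableAt ℂ f ((x:ℝ):ℂ) := by
      apply hfdiff
      rw [Complex.norm_real, Real.norm_eq_abs]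
      exact hx
    exact hdx.hasDerivAt.real_of_complex
  -- mean value estimate
  have step : ∀ x y : ℝ, 0 ≤ x → x < y → y < 1 → F y - F x ≤ A * (y - x) / (1 - y) := by
    intro x y hx0 hxy hy1
    have hcont : ContinuousOn F (Set.Icc x y) := by
      intro t ht
      have h1 : |t| < 1 := by
        rw [abs_lt]; exact ⟨by linarith [ht.1], by linarith [ht.2]⟩
      exact (hFd t h1).continuousAt.continuousWithinAt
    have hderiv : ∀ t ∈ Set.Ioo x y, HasDerivAt F (deriv f ((t:ℝ):ℂ)).re t := by
      intro t ht
      exact hFd t (by rw [abs_lt]; exact ⟨by linarith [ht.1], by linarith [ht.2]⟩)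
    obtain ⟨ξ, hξ, hslope⟩ :=
      exists_hasDerivAt_eq_slope F (fun t => (deriv f ((t:ℝ):ℂ)).re) hxy hcont hderiv
    have hξ0 : 0 ≤ ξ := by linarith [hξ.1]
    have hξ1 : ξ < 1 := by linarith [hξ.2]
    have h1 : (deriv f ((ξ:ℝ):ℂ)).re ≤ A / (1 - ξ) := by
      calc (deriv f ((ξ:ℝ):ℂ)).re ≤ |(deriv f ((ξ:ℝ):ℂ)).re| := le_abs_self _
        _ ≤ ‖deriv f ((ξ:ℝ):ℂ)‖ := by
            exact Complex.abs_re_le_norm _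
        _ ≤ A / (1 - ξ) := hDbound ξ hξ0 hξ1
    have h2 : A / (1 - ξ) ≤ A / (1 - y) :=
      div_le_div_of_nonneg_left hA0 (by linarith) (by linarith [hξ.2])
    have h3 : (deriv f ((ξ:ℝ):ℂ)).re * (y - x) = F y - F x := by
      rw [hslope, div_mul_cancel₀ _ (ne_of_gt (by linarith : (0:ℝ) < y - x))]
    have h4 : (deriv f ((ξ:ℝ):ℂ)).re * (y - x) ≤ (A / (1 - y)) * (y - x) :=
      mul_le_mul_of_nonneg_right (h1.trans h2) (by linarith)
    calc F y - F x = (deriv f ((ξ:ℝ):ℂ)).re * (y - x) := h3.symm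
      _ ≤ (A / (1 - y)) * (y - x) := h4
      _ = A * (y - x) / (1 - y) := by ring
  -- dyadic points
  set xj : ℕ → ℝ := fun j => 1 - (1/2:ℝ) ^ j with hxj
  have hpowpos : ∀ j : ℕ, (0:ℝ) < (1/2:ℝ) ^ j := fun j => by positivity
  have hxj0 : ∀ j, 0 ≤ xj j := by
    intro j
    have h1 : (1/2:ℝ) ^ j ≤ 1 := pow_le_one₀ (by norm_num) (by norm_num)
    rw [hxj]; dsimp only; linarith
  have hxjlt : ∀ j, xj j < 1 := by
    intro j
    have := hpowpos j
    rw [hxj]; dsimp only; linarith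
  have hstepj : ∀ j : ℕ, F (xj (j+1)) - F (xj j) ≤ A := by
    intro j
    have hlt : xj j < xj (j+1) := by
      have h1 : (1/2:ℝ) ^ (j+1) < (1/2:ℝ) ^ j :=
        pow_lt_pow_right_of_lt_one₀ (by norm_num) (by norm_num) (Nat.lt_succ_self j)
      rw [hxj]; dsimp only; linarith
    have h := step (xj j) (xj (j+1)) (hxj0 j) hlt (hxjlt (j+1))
    have he1 : xj (j+1) - xj j = (1/2:ℝ) ^ (j+1) := by
      rw [hxj]; dsimp only; rw [pow_succ]; ring
    have he2 : 1 - xj (j+1) = (1/2:ℝ) ^ (j+1) := by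
      rw [hxj]; dsimp only; ring
    rw [he1, he2] at h
    rwa [mul_div_assoc, div_self (ne_of_gt (hpowpos (j+1))), mul_one] at h
  have tele : ∀ J : ℕ, F (xj J) ≤ F (xj 0) + A * J := by
    intro J
    induction J with
    | zero => simp
    | succ n ih =>
      have h := hstepj n
      push_cast
      push_cast at ih
      linarith
  have hxj00 : xj 0 = 0 := by rw [hxj]; norm_num
  have hF0 : F 0 = 1 := by
    have h0 := hfsum 0 (by norm_num)
    have h1 : HasSum (fun n : ℕ => a n * (0:ℂ) ^ n) (a 0 * (0:ℂ) ^ 0) :=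
      hasSum_single 0 (fun n hn => by simp [zero_pow hn])
    have h2 : f 0 = a 0 := by
      have h3 := h0.unique h1
      simpa using h3
    have h4 : a 0 = 1 := by
      rw [ha]
      norm_num
    rw [hF]
    dsimp only
    rw [Complex.ofReal_zero, h2, h4, Complex.one_re]
  -- lower bound for `F` at dyadic points
  have hc : (0:ℝ) < α/4 * Real.log 2 := mul_pos (by linarith) (Real.log_pos one_lt_two)
  set c : ℝ := α/4 * Real.log 2 with hcdef
  have lower : ∀ J : ℕ, 1 ≤ J → Real.exp (c * J) / 8 ≤ F (xj J) := by
    intro J hJ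
    set M : ℕ := 2 ^ J with hM
    have hM2 : 2 ≤ M := by
      calc 2 = 2^1 := (pow_one 2).symm
        _ ≤ 2^J := Nat.pow_le_pow_right (by norm_num) hJ
    have hMR : (0:ℝ) < (M:ℝ) := by positivity
    have hMR2 : (2:ℝ) ≤ (M:ℝ) := by exact_mod_cast hM2
    have hxval : xj J = 1 - ((M:ℝ))⁻¹ := by
      rw [hxj]; dsimp only
      rw [hM, one_div, inv_pow]
      push_cast
      ring
    set x : ℝ := xj J with hxdef
    have hx0 : 0 ≤ x := hxj0 J
    have hx1 : x < 1 := hxjlt J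
    have hxd : ‖((x:ℝ):ℂ)‖ < 1 := by
      rw [Complex.norm_real, Real.norm_eq_abs, _root_.abs_of_nonneg hx0]; exact hx1
    have hsumC := hfsum ((x:ℝ):ℂ) hxd
    have hterm_eq : ∀ n : ℕ, (a n * ((x:ℝ):ℂ) ^ n).re = ((n:ℝ)+1) ^ (-s) * x ^ n := by
      intro n
      rw [ha]
      dsimp only
      rw [← Complex.ofReal_pow, ← Complex.ofReal_mul, Complex.ofReal_re]
    have hsumR : HasSum (fun n : ℕ => ((n:ℝ)+1) ^ (-s) * x ^ n) (F x) := by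
      have h := Complex.hasSum_re hsumC
      simp only [hterm_eq] at h
      exact h
    have hterm : ∀ n ∈ Finset.range M, (M:ℝ) ^ (-s) * x ^ M ≤ ((n:ℝ)+1) ^ (-s) * x ^ n := by
      intro n hn
      rw [Finset.mem_range] at hn
      have hle : (n:ℝ) + 1 ≤ (M:ℝ) := by exact_mod_cast hn
      have h1 : ((M:ℝ)) ^ (-s) ≤ ((n:ℝ)+1) ^ (-s) :=
        Real.rpow_le_rpow_of_nonpos (by linarith [hn1 n]) hle (by linarith)
      have h2 : x ^ M ≤ x ^ n := pow_le_pow_of_le_one hx0 hx1.le hn.le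
      exact mul_le_mul h1 h2 (by positivity) (by positivity)
    have hsum_lb : (M:ℝ) * ((M:ℝ) ^ (-s) * x ^ M) ≤ F x := by
      have hps : ∑ n ∈ Finset.range M, ((n:ℝ)+1) ^ (-s) * x ^ n ≤ F x :=
        sum_le_hasSum _ (fun n _ => by positivity) hsumR
      have hcard := Finset.card_nsmul_le_sum (Finset.range M) _ _ hterm
      rw [Finset.card_range, nsmul_eq_mul] at hcard
      linarith
    have hx8 : (1:ℝ)/8 ≤ x ^ M := by
      set t : ℝ := ((M:ℝ) - 1)⁻¹ with ht
      have ht0 : 0 < t := by rw [ht]; exact inv_pos.2 (by linarith)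
      have hM1 : (M:ℝ) - 1 ≠ 0 := by linarith
      have hxt : x * (1 + t) = 1 := by
        rw [hxval, ht]
        field_simp
        ring
      have h5 : (1 + t) ^ M ≤ 8 := by
        have h6 : (1:ℝ) + t ≤ Real.exp t := by linarith [Real.add_one_le_exp t]
        have h7 : (1 + t) ^ M ≤ Real.exp t ^ M := pow_le_pow_left₀ (by linarith) h6 M
        rw [← Real.exp_nat_mul] at h7
        have h8 : (M:ℝ) * t ≤ 2 := by
          rw [ht, ← div_eq_mul_inv, div_le_iff₀ (by linarith)]
          linarith
        have h9 : Real.exp ((M:ℝ)*t) ≤ Real.exp 2 := Real.exp_le_exp.2 h8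
        have h10 : Real.exp 2 ≤ 8 := by
          have he1 := Real.exp_one_lt_d9
          have h11 : Real.exp 2 = Real.exp 1 ^ 2 := by
            rw [← Real.exp_nat_mul]; norm_num
          nlinarith [Real.exp_pos 1]
        linarith
      have h12 : x ^ M * (1 + t) ^ M = 1 := by rw [← mul_pow, hxt, one_pow]
      nlinarith [mul_le_mul_of_nonneg_left h5 (pow_nonneg hx0 M), h12]
    have hMexp : (M:ℝ) * (M:ℝ) ^ (-s) = Real.exp (c * J) := by
      have h1 : (M:ℝ) * (M:ℝ) ^ (-s) = (M:ℝ) ^ (1 - s) := by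
        rw [show (1:ℝ) - s = 1 + (-s) by ring, Real.rpow_add hMR, Real.rpow_one]
      rw [h1, Real.rpow_def_of_pos hMR]
      congr 1
      have h2 : Real.log (M:ℝ) = J * Real.log 2 := by
        rw [hM]; push_cast; rw [Real.log_pow]
      rw [h2, hcdef, hs]; ring
    calc Real.exp (c * J) / 8 = (M:ℝ) * ((M:ℝ) ^ (-s) * (1/8)) := by
          rw [← hMexp]; ring
      _ ≤ (M:ℝ) * ((M:ℝ) ^ (-s) * x ^ M) := by
          apply mul_le_mul_of_nonneg_left _ hMR.le
          exact mul_le_mul_of_nonneg_left hx8 (Real.rpow_nonneg hMR.le _)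
      _ ≤ F x := hsum_lb
  -- choose `J` large and derive the contradiction
  set J : ℕ := ⌈32 * (A + 2) / c ^ 2⌉₊ + 1 with hJ
  have hJ1 : 1 ≤ J := Nat.le_add_left 1 _
  have hJge : 32 * (A + 2) / c ^ 2 ≤ (J:ℝ) := by
    calc 32 * (A + 2) / c ^ 2 ≤ (⌈32 * (A + 2) / c ^ 2⌉₊ : ℝ) := Nat.le_ceil _
      _ ≤ (J:ℝ) := by rw [hJ]; push_cast; linarith
  have hJpos : (1:ℝ) ≤ (J:ℝ) := by exact_mod_cast hJ1
  have hup := tele J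
  rw [hxj00, hF0] at hup
  have hlo := lower J hJ1
  have hexp : c ^ 2 * (J:ℝ) ^ 2 / 4 ≤ Real.exp (c * J) := by
    have h1 : c * (J:ℝ) / 2 ≤ Real.exp (c * (J:ℝ) / 2) := by
      linarith [Real.add_one_le_exp (c * (J:ℝ) / 2)]
    have h2 : (c * (J:ℝ) / 2) ^ 2 ≤ Real.exp (c * (J:ℝ) / 2) ^ 2 :=
      pow_le_pow_left₀ (by positivity) h1 2
    rw [← Real.exp_nat_mul] at h2
    have h3 : ((2:ℕ):ℝ) * (c * (J:ℝ) / 2) = c * (J:ℝ) := by push_cast; ring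
    rw [h3] at h2
    nlinarith [h2]
  have hfin : A * (J:ℝ) + 2 ≤ c ^ 2 * (J:ℝ) ^ 2 / 32 := by
    have h1 : 32 * (A + 2) ≤ (J:ℝ) * c ^ 2 := by
      rw [div_le_iff₀ (by positivity)] at hJge
      linarith
    nlinarith [hJpos, hA0, mul_le_mul_of_nonneg_right h1 (by positivity : (0:ℝ) ≤ (J:ℝ))]
  linarith [hexp, hlo, hup, hfin]

end
end

section
/- Let α ∈ (0,1) and let r ∈ ℂ with 0 < |r| < 1. The linear map T_r on H_α given by (T_r a)_n = (n+1) r^n a_{n+1} (the operator representing D_φ for φ(z) = rz) is bounded, and its operator norm equals (⌊x_0⌋+1)^{(3−α)/2}(⌊x_0⌋+2)^{(α−1)/2}|r|^{⌊x_0⌋} if f(⌊x_0⌋) < f(⌊x_0⌋+1), and ⌊x_0⌋^{(3−α)/2}(⌊x_0⌋+1)^{(α−1)/2}|r|^{⌊x_0⌋−1} otherwise, where f(x) = x^{(3−α)/2}(x+1)^{(α−1)/2}|r|^{x−1} and x_0 = [−(1+log|r|) − √((1+log|r|)² − 2(3−α)log|r|)]/(2 log|r|). -/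
open Complex MeasureTheory Metric Set ENNReal

noncomputable section

lemma lintegral_dirMeasure (α : ℝ) (g : ℕ → ℝ≥0∞) :
    ∫⁻ n, g n ∂(dirMeasure α) = ∑' n : ℕ, ((n : ℝ≥0∞) + 1) ^ (1 - α) * g n := by
  rw [dirMeasure, lintegral_sum_measure]
  congr 1; funext n
  rw [lintegral_smul_measure, lintegral_dirac, smul_eq_mul]

lemma dirMeasure_singleton (α : ℝ) (n : ℕ) :
    dirMeasure α {n} = ((n : ℝ≥0∞) + 1) ^ (1 - α) := by
  rw [dirMeasure, Measure.sum_apply _ (measurableSet_singleton n)]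
  rw [tsum_eq_single n]
  · simp
  · intro m hm
    simp [Measure.dirac_apply', hm, Set.indicator_of_notMem]

lemma dirMeasure_singleton_pos (α : ℝ) (hα : α < 1) (n : ℕ) :
    0 < dirMeasure α {n} := by
  rw [dirMeasure_singleton]
  exact ENNReal.rpow_pos (lt_of_lt_of_le zero_lt_one le_add_self) (by simp)

lemma dirMeasure_ae (α : ℝ) (hα : α < 1) {p : ℕ → Prop}
    (h : ∀ᵐ n ∂(dirMeasure α), p n) (n : ℕ) : p n := by
  by_contra hn
  have h1 : dirMeasure α {m | ¬ p m} = 0 := h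
  have h2 : dirMeasure α {n} ≤ dirMeasure α {m | ¬ p m} :=
    measure_mono (by simpa using hn)
  have := dirMeasure_singleton_pos α hα n
  rw [h1] at h2
  exact absurd (le_antisymm h2 zero_le) (ne_of_gt this)

lemma eLpNorm_dirMeasure (α : ℝ) (f : ℕ → ℂ) :
    eLpNorm f 2 (dirMeasure α) =
      (∑' n : ℕ, ((n : ℝ≥0∞) + 1) ^ (1 - α) * (‖f n‖₊ : ℝ≥0∞) ^ 2) ^ (1/2 : ℝ) := by
  rw [eLpNorm_eq_lintegral_rpow_enorm_toReal two_ne_zero ENNReal.ofNat_ne_top,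
    lintegral_dirMeasure]
  have h2 : (2:ℝ≥0∞).toReal = 2 := by norm_num
  rw [h2]
  congr 1
  refine tsum_congr fun n => ?_
  congr 1
  rw [← ENNReal.rpow_natCast]
  norm_num
  rfl

/-- The squared weighted ℓ² sum in `ℝ≥0∞`. -/
def Wsum (α : ℝ) (f : ℕ → ℂ) : ℝ≥0∞ :=
  ∑' n : ℕ, ((n : ℝ≥0∞) + 1) ^ (1 - α) * (‖f n‖₊ : ℝ≥0∞) ^ 2

lemma eLpNorm_eq_Wsum (α : ℝ) (f : ℕ → ℂ) :
    eLpNorm f 2 (dirMeasure α) = (Wsum α f) ^ (1/2 : ℝ) := eLpNorm_dirMeasure α f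

lemma memℒp_of_Wsum (α : ℝ) (f : ℕ → ℂ) (h : Wsum α f < ⊤) :
    MemLp f 2 (dirMeasure α) := by
  refine ⟨Measurable.aestronglyMeasurable (measurable_from_nat), ?_⟩
  rw [eLpNorm_eq_Wsum]
  exact ENNReal.rpow_lt_top_of_nonneg (by norm_num) h.ne

lemma Wsum_lt_top (α : ℝ) (a : Lp ℂ 2 (dirMeasure α)) : Wsum α ⇑a < ⊤ := by
  have h := Lp.eLpNorm_lt_top a
  rw [eLpNorm_eq_Wsum] at h
  by_contra htop
  rw [not_lt, top_le_iff] at htop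
  rw [htop] at h
  simp [ENNReal.top_rpow_of_pos (by norm_num : (0:ℝ) < 1/2)] at h

lemma norm_Lp_eq (α : ℝ) (a : Lp ℂ 2 (dirMeasure α)) :
    ‖a‖ = ((Wsum α ⇑a) ^ (1/2 : ℝ)).toReal := by
  rw [Lp.norm_def, eLpNorm_eq_Wsum]


def Ffun (α R : ℝ) : ℝ → ℝ := fun x => x ^ ((3 - α)/2) * (x+1) ^ ((α-1)/2) * R ^ (x - 1)

def xcrit (α R : ℝ) : ℝ :=
  (-(1 + Real.log R) - Real.sqrt ((1 + Real.log R)^2 - 2*(3-α)*Real.log R)) / (2 * Real.log R)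

variable {α R : ℝ}

section RealLemmas
variable (hα1 : 0 < α) (hα2 : α < 1) (hR0 : 0 < R) (hR1 : R < 1)

include hR0 hR1 in
lemma L_neg : Real.log R < 0 := Real.log_neg hR0 hR1

include hα2 hR0 hR1 in
lemma D_pos : 0 < (1 + Real.log R)^2 - 2*(3-α)*Real.log R := by
  have hL := L_neg hR0 hR1
  nlinarith [sq_nonneg (1 + Real.log R)]

include hα2 hR0 hR1 in
lemma xcrit_pos : 0 < xcrit α R := by
  have hL := L_neg hR0 hR1
  have hD := D_pos hα2 hR0 hR1
  have hs : Real.sqrt ((1 + Real.log R)^2 - 2*(3-α)*Real.log R) ^ 2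
      = (1 + Real.log R)^2 - 2*(3-α)*Real.log R := Real.sq_sqrt hD.le
  have hs0 : 0 < Real.sqrt ((1 + Real.log R)^2 - 2*(3-α)*Real.log R) := Real.sqrt_pos.mpr hD
  rw [xcrit]
  apply div_pos_of_neg_of_neg _ (by linarith)
  -- need: -(1+L) - s < 0, i.e. s > -(1+L)
  set L := Real.log R
  set s := Real.sqrt ((1 + L)^2 - 2*(3-α)*L)
  rcases le_or_gt 0 (1 + L) with h | h
  · linarith
  · nlinarith

-- sign of the quadratic  g(x) = L x² + (L+1) x + (3-α)/2
include hα2 hR0 hR1 in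
lemma g_sign (x : ℝ) (hx : 0 < x) :
    (x < xcrit α R → 0 < Real.log R * x^2 + (Real.log R + 1) * x + (3-α)/2) ∧
    (xcrit α R < x → Real.log R * x^2 + (Real.log R + 1) * x + (3-α)/2 < 0) := by
  have hL := L_neg hR0 hR1
  have hD := D_pos hα2 hR0 hR1
  set L := Real.log R with hLdef
  set s := Real.sqrt ((1 + L)^2 - 2*(3-α)*L) with hsdef
  have hs : s ^ 2 = (1 + L)^2 - 2*(3-α)*L := Real.sq_sqrt hD.le
  have hs0 : 0 < s := Real.sqrt_pos.mpr hD
  set x₀ := xcrit α R with hx₀def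
  set x₁ := (-(1 + L) + s) / (2 * L) with hx₁def
  have hLne : L ≠ 0 := hL.ne
  have hsum : x₀ + x₁ = -(L+1)/L := by
    rw [hx₀def, xcrit, ← hLdef, ← hsdef, hx₁def]
    field_simp
    ring
  have hprod : x₀ * x₁ = ((3-α)/2) / L := by
    rw [hx₀def, xcrit, ← hLdef, ← hsdef, hx₁def]
    rw [div_mul_div_comm]
    rw [div_eq_div_iff (by positivity) hLne]
    nlinarith [hs]
  have key : L * x^2 + (L+1)*x + (3-α)/2 = L * (x - x₀) * (x - x₁) := by
    have e1 : L * (x - x₀) * (x - x₁) = L*x^2 - L*(x₀+x₁)*x + L*(x₀*x₁) := by ring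
    rw [e1, hsum, hprod]
    field_simp
    ring
  have hx₁neg : x₁ < 0 := by
    rw [hx₁def]
    apply div_neg_of_pos_of_neg _ (by linarith)
    rcases le_or_gt 0 (1 + L) with h | h
    · nlinarith
    · linarith
  constructor
  · intro h
    rw [key]
    have h2 : x - x₁ > 0 := by linarith
    exact mul_pos (mul_pos_of_neg_of_neg hL (by linarith)) h2
  · intro h
    rw [key]
    have h2 : x - x₁ > 0 := by linarith
    exact mul_neg_of_neg_of_pos (mul_neg_of_neg_of_pos hL (by linarith)) h2


def hfun (α R : ℝ) : ℝ → ℝ := fun x =>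
  (3-α)/2 * Real.log x + (α-1)/2 * Real.log (x+1) + (x-1) * Real.log R

include hR0 in
lemma Ffun_eq_exp (x : ℝ) (hx : 0 < x) : Ffun α R x = Real.exp (hfun α R x) := by
  rw [Ffun, hfun, Real.rpow_def_of_pos hx, Real.rpow_def_of_pos (by linarith : (0:ℝ) < x + 1),
    Real.rpow_def_of_pos hR0, ← Real.exp_add, ← Real.exp_add]
  congr 1
  ring

lemma hasDerivAt_hfun (x : ℝ) (hx : 0 < x) :
    HasDerivAt (hfun α R) ((3-α)/2 * x⁻¹ + (α-1)/2 * (x+1)⁻¹ + Real.log R) x := by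
  have h1 : HasDerivAt (fun x : ℝ => (3-α)/2 * Real.log x) ((3-α)/2 * x⁻¹) x :=
    (Real.hasDerivAt_log hx.ne').const_mul _
  have h2' : HasDerivAt (fun x : ℝ => Real.log (x+1)) ((x+1)⁻¹) x := by
    have := (Real.hasDerivAt_log (by linarith : x + 1 ≠ 0)).comp x
      ((hasDerivAt_id x).add_const 1)
    simp at this
    exact this
  have h2 : HasDerivAt (fun x : ℝ => (α-1)/2 * Real.log (x+1)) ((α-1)/2 * (x+1)⁻¹) x :=
    h2'.const_mul _
  have h3 : HasDerivAt (fun x : ℝ => (x-1) * Real.log R) (Real.log R) x := by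
    simpa using ((hasDerivAt_id x).sub_const 1).mul_const (Real.log R)
  exact (h1.add h2).add h3

include hα2 hR0 hR1 in
lemma deriv_hfun_pos (x : ℝ) (hx : 0 < x) (hx' : x < xcrit α R) :
    0 < (3-α)/2 * x⁻¹ + (α-1)/2 * (x+1)⁻¹ + Real.log R := by
  have hg := ((g_sign hα2 hR0 hR1 x hx).1 hx')
  have hx1 : (0:ℝ) < x + 1 := by linarith
  have heq : (3-α)/2 * x⁻¹ + (α-1)/2 * (x+1)⁻¹ + Real.log R
      = (Real.log R * x^2 + (Real.log R + 1) * x + (3-α)/2) / (x * (x+1)) := by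
    field_simp
    ring
  rw [heq]
  positivity

include hα2 hR0 hR1 in
lemma deriv_hfun_neg (x : ℝ) (hx : 0 < x) (hx' : xcrit α R < x) :
    (3-α)/2 * x⁻¹ + (α-1)/2 * (x+1)⁻¹ + Real.log R < 0 := by
  have hg := ((g_sign hα2 hR0 hR1 x hx).2 hx')
  have hx1 : (0:ℝ) < x + 1 := by linarith
  have heq : (3-α)/2 * x⁻¹ + (α-1)/2 * (x+1)⁻¹ + Real.log R
      = (Real.log R * x^2 + (Real.log R + 1) * x + (3-α)/2) / (x * (x+1)) := by
    field_simp
    ring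
  rw [heq]
  exact div_neg_of_neg_of_pos hg (by positivity)

include hα2 hR0 hR1 in
lemma Ffun_mono {u v : ℝ} (hu : 0 < u) (huv : u ≤ v) (hv : v ≤ xcrit α R) :
    Ffun α R u ≤ Ffun α R v := by
  rcases eq_or_lt_of_le huv with rfl | huv
  · exact le_refl _
  have hmono : StrictMonoOn (hfun α R) (Set.Icc u v) := by
    apply strictMonoOn_of_deriv_pos (convex_Icc u v)
    · exact fun x hx => (hasDerivAt_hfun x (lt_of_lt_of_le hu hx.1)).continuousAt.continuousWithinAt
    · intro x hx
      rw [interior_Icc] at hx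
      rw [(hasDerivAt_hfun x (hu.trans hx.1)).deriv]
      exact deriv_hfun_pos hα2 hR0 hR1 x (hu.trans hx.1) (lt_of_lt_of_le hx.2 hv)
  have := hmono (Set.left_mem_Icc.mpr huv.le) (Set.right_mem_Icc.mpr huv.le) huv
  rw [Ffun_eq_exp hR0 u hu, Ffun_eq_exp hR0 v (hu.trans huv)]
  exact (Real.exp_lt_exp.mpr this).le

include hα2 hR0 hR1 in
lemma Ffun_anti {u v : ℝ} (hu : xcrit α R ≤ u) (huv : u ≤ v) :
    Ffun α R v ≤ Ffun α R u := by
  have hx0 := xcrit_pos hα2 hR0 hR1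
  have hu0 : 0 < u := lt_of_lt_of_le hx0 hu
  rcases eq_or_lt_of_le huv with rfl | huv
  · exact le_refl _
  have hanti : StrictAntiOn (hfun α R) (Set.Icc u v) := by
    apply strictAntiOn_of_deriv_neg (convex_Icc u v)
    · exact fun x hx => (hasDerivAt_hfun x (lt_of_lt_of_le hu0 hx.1)).continuousAt.continuousWithinAt
    · intro x hx
      rw [interior_Icc] at hx
      rw [(hasDerivAt_hfun x (hu0.trans hx.1)).deriv]
      exact deriv_hfun_neg hα2 hR0 hR1 x (hu0.trans hx.1) (lt_of_le_of_lt hu hx.1)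
  have := hanti (Set.left_mem_Icc.mpr huv.le) (Set.right_mem_Icc.mpr huv.le) huv
  rw [Ffun_eq_exp hR0 u hu0, Ffun_eq_exp hR0 v (hu0.trans huv)]
  exact (Real.exp_lt_exp.mpr this).le


include hR0 in
lemma Ffun_pos {y : ℝ} (hy : 0 < y) : 0 < Ffun α R y := by
  rw [Ffun]
  have : (0:ℝ) < y + 1 := by linarith
  positivity

include hα1 hα2 hR0 hR1 in
lemma exists_max :
    ∃ m₀ : ℕ, 1 ≤ m₀ ∧
      (∀ m : ℕ, 1 ≤ m → Ffun α R m ≤ Ffun α R m₀) ∧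
      Ffun α R m₀ =
        (if Ffun α R (⌊xcrit α R⌋ : ℝ) < Ffun α R ((⌊xcrit α R⌋ : ℝ) + 1) then
          ((⌊xcrit α R⌋ : ℝ) + 1) ^ ((3 - α) / 2) * ((⌊xcrit α R⌋ : ℝ) + 2) ^ ((α - 1) / 2) *
            R ^ (⌊xcrit α R⌋ : ℝ)
        else
          (⌊xcrit α R⌋ : ℝ) ^ ((3 - α) / 2) * ((⌊xcrit α R⌋ : ℝ) + 1) ^ ((α - 1) / 2) *
            R ^ ((⌊xcrit α R⌋ : ℝ) - 1)) := by
  have hx0 := xcrit_pos hα2 hR0 hR1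
  set x₀ := xcrit α R with hx₀def
  set k : ℤ := ⌊x₀⌋ with hkdef
  have hk0 : 0 ≤ k := Int.floor_nonneg.mpr hx0.le
  have hkle : (k:ℝ) ≤ x₀ := Int.floor_le x₀
  have hklt : x₀ < (k:ℝ) + 1 := Int.lt_floor_add_one x₀
  have hKR : ((k.toNat : ℕ) : ℝ) = (k:ℝ) := by exact_mod_cast Int.toNat_of_nonneg hk0
  have ethen : ((k : ℝ) + 1) ^ ((3 - α) / 2) * ((k : ℝ) + 2) ^ ((α - 1) / 2) * R ^ (k : ℝ)
      = Ffun α R ((k:ℝ) + 1) := by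
    rw [Ffun]
    have e1 : (k:ℝ) + 1 + 1 = (k:ℝ) + 2 := by ring
    have e2 : (k:ℝ) + 1 - 1 = (k:ℝ) := by ring
    rw [e1, e2]
  have eelse : (k : ℝ) ^ ((3 - α) / 2) * ((k : ℝ) + 1) ^ ((α - 1) / 2) * R ^ ((k : ℝ) - 1)
      = Ffun α R (k:ℝ) := rfl
  have hcastlt : ∀ m : ℕ, (k:ℝ) < (m:ℝ) → (k:ℝ) + 1 ≤ (m:ℝ) := by
    intro m h
    have h1 : k < (m:ℤ) := by exact_mod_cast h
    have h2 : k + 1 ≤ (m:ℤ) := h1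
    exact_mod_cast h2
  by_cases hcond : Ffun α R (k:ℝ) < Ffun α R ((k:ℝ) + 1)
  · refine ⟨k.toNat + 1, le_add_self, ?_, ?_⟩
    · intro m hm
      have hmcast : ((k.toNat + 1 : ℕ) : ℝ) = (k:ℝ) + 1 := by push_cast [hKR]; ring
      rw [hmcast]
      have hm0 : (0:ℝ) < (m:ℝ) := by exact_mod_cast hm
      rcases le_or_gt (m:ℝ) (k:ℝ) with h | h
      · exact le_trans (Ffun_mono hα2 hR0 hR1 hm0 h hkle) hcond.le
      · exact Ffun_anti hα2 hR0 hR1 hklt.le (hcastlt m h)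
    · rw [if_pos hcond, ethen]
      congr 1
      push_cast [hKR]; ring
  · rw [not_lt] at hcond
    have hk1 : 1 ≤ k := by
      by_contra hlt
      have hk00 : k = 0 := by omega
      have hzero : (k:ℝ) = 0 := by rw [hk00]; norm_num
      rw [hzero] at hcond
      have hp : (0:ℝ) < (3 - α)/2 := by linarith
      have h0 : Ffun α R 0 = 0 := by
        rw [Ffun, Real.zero_rpow hp.ne']
        ring
      have h1 : 0 < Ffun α R (0 + 1) := Ffun_pos hR0 (by norm_num)
      rw [h0] at hcond
      linarith
    refine ⟨k.toNat, by omega, ?_, ?_⟩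
    · intro m hm
      rw [hKR]
      have hm0 : (0:ℝ) < (m:ℝ) := by exact_mod_cast hm
      rcases le_or_gt (m:ℝ) (k:ℝ) with h | h
      · exact Ffun_mono hα2 hR0 hR1 hm0 h hkle
      · exact le_trans (Ffun_anti hα2 hR0 hR1 hklt.le (hcastlt m h)) hcond
    · rw [if_neg (not_lt.mpr hcond), eelse, hKR]

end RealLemmas


section Helpers
variable {α : ℝ}

lemma sq_rpow (b : ℝ) (hb : 0 ≤ b) (p : ℝ) : (b ^ p) ^ (2:ℕ) = b ^ (2*p) := by
  rw [← Real.rpow_natCast (b ^ p) 2, ← Real.rpow_mul hb]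
  norm_num
  rw [mul_comm]

lemma Ffun_sq {R : ℝ} (hα2 : α < 1) (hR0 : 0 < R) (x : ℝ) (hx : 0 < x) :
    x ^ (1-α) * (x * R ^ (x-1)) ^ 2 = Ffun α R x ^ 2 * (x+1) ^ (1-α) := by
  have hx1 : (0:ℝ) < x + 1 := by linarith
  rw [Ffun, mul_pow, mul_pow, mul_pow]
  rw [sq_rpow x hx.le, sq_rpow (x+1) hx1.le, sq_rpow R hR0.le]
  rw [show (x:ℝ)^(2:ℕ) = x ^ ((2:ℕ):ℝ) from (Real.rpow_natCast x 2).symm]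
  rw [← mul_assoc, ← Real.rpow_add hx]
  rw [show x ^ (2 * ((3 - α) / 2)) * (x + 1) ^ (2 * ((α - 1) / 2)) * R ^ (2 * (x - 1)) *
      (x + 1) ^ (1 - α)
    = x ^ (2*((3-α)/2)) * R^(2*(x-1)) * ((x+1)^(2*((α-1)/2)) * (x+1)^(1-α)) from by ring]
  rw [← Real.rpow_add hx1, show 2*((α-1)/2) + (1-α) = 0 by ring, Real.rpow_zero, mul_one]
  rw [show (1-α)+((2:ℕ):ℝ) = 2*((3-α)/2) by push_cast; ring]

lemma w_ofReal (α : ℝ) (n : ℕ) :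
    ((n : ℝ≥0∞) + 1) ^ (1 - α) = ENNReal.ofReal (((n:ℝ) + 1) ^ (1 - α)) := by
  rw [← ENNReal.ofReal_rpow_of_pos (by positivity : (0:ℝ) < (n:ℝ)+1)]
  congr 1
  rw [ENNReal.ofReal_add (by positivity) zero_le_one]
  simp

def shiftFun (r : ℂ) (a : ℕ → ℂ) : ℕ → ℂ := fun n => ((n:ℂ)+1) * r^n * a (n+1)

lemma norm_shiftFun (r : ℂ) (a : ℕ → ℂ) (n : ℕ) :
    ‖shiftFun r a n‖ = (((n:ℝ)+1) * ‖r‖^n) * ‖a (n+1)‖ := by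
  rw [shiftFun, norm_mul, norm_mul, norm_pow]
  congr 2
  have : ((n:ℂ)+1) = ((n+1:ℕ):ℂ) := by push_cast; ring
  rw [this, Complex.norm_natCast]
  push_cast; ring

lemma Wsum_shift_le (r : ℂ) (S : ℝ)
    (hub : ∀ n : ℕ, (((n:ℝ)+1))^(1-α) * ((((n:ℝ)+1)) * ‖r‖^n)^2
      ≤ S^2 * ((((n:ℝ)+1)+1))^(1-α))
    (a : ℕ → ℂ) :
    Wsum α (shiftFun r a) ≤ ENNReal.ofReal (S^2) * Wsum α a := by
  rw [Wsum, Wsum]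
  calc ∑' n : ℕ, ((n : ℝ≥0∞) + 1) ^ (1 - α) * (‖shiftFun r a n‖₊ : ℝ≥0∞) ^ 2
      ≤ ∑' n : ℕ, ENNReal.ofReal (S^2) *
          ((((n+1:ℕ) : ℝ≥0∞) + 1) ^ (1 - α) * (‖a (n+1)‖₊ : ℝ≥0∞) ^ 2) := by
        apply ENNReal.tsum_le_tsum
        intro n
        have hsplit : (‖shiftFun r a n‖₊ : ℝ≥0∞)^2
            = ENNReal.ofReal (((((n:ℝ)+1)) * ‖r‖^n)^2) * (‖a (n+1)‖₊ : ℝ≥0∞)^2 := by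
          rw [← (ofReal_norm _).trans (enorm_eq_nnnorm _), norm_shiftFun, ENNReal.ofReal_mul (by positivity),
            mul_pow, ← ENNReal.ofReal_pow (by positivity), (ofReal_norm _).trans (enorm_eq_nnnorm _)]
        rw [hsplit, w_ofReal, w_ofReal, ← mul_assoc, ← mul_assoc,
          ← ENNReal.ofReal_mul (by positivity), ← ENNReal.ofReal_mul (by positivity)]
        apply mul_le_mul_left
        apply ENNReal.ofReal_le_ofReal
        have := hub n
        push_cast
        linarith
    _ = ENNReal.ofReal (S^2) *
          ∑' n : ℕ, ((((n+1:ℕ) : ℝ≥0∞) + 1) ^ (1 - α) * (‖a (n+1)‖₊ : ℝ≥0∞) ^ 2) :=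
        ENNReal.tsum_mul_left
    _ ≤ ENNReal.ofReal (S^2) * ∑' n : ℕ, (((n : ℝ≥0∞) + 1) ^ (1 - α) * (‖a n‖₊ : ℝ≥0∞) ^ 2) := by
        apply mul_le_mul_right
        exact ENNReal.tsum_comp_le_tsum_of_injective Nat.succ_injective
          (fun n => ((n : ℝ≥0∞) + 1) ^ (1 - α) * (‖a n‖₊ : ℝ≥0∞) ^ 2)

end Helpers

def shiftLM (α : ℝ) (hα2 : α < 1) (r : ℂ)
    (hmemA : ∀ a : Lp ℂ 2 (dirMeasure α), MemLp (shiftFun r ⇑a) 2 (dirMeasure α)) :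
    Lp ℂ 2 (dirMeasure α) →ₗ[ℂ] Lp ℂ 2 (dirMeasure α) where
  toFun a := (hmemA a).toLp _
  map_add' a b := by
    rw [← MemLp.toLp_add (hmemA a) (hmemA b)]
    apply MemLp.toLp_congr
    apply Filter.Eventually.of_forall
    intro n
    have hab := dirMeasure_ae α hα2 (Lp.coeFn_add a b)
    simp only [shiftFun, Pi.add_apply, hab (n+1)]
    ring
  map_smul' c a := by
    simp only [RingHom.id_apply]
    rw [← MemLp.toLp_const_smul c (hmemA a)]
    apply MemLp.toLp_congr
    apply Filter.Eventually.of_forall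
    intro n
    have hca := dirMeasure_ae α hα2 (Lp.coeFn_smul c a)
    simp only [shiftFun, Pi.smul_apply, smul_eq_mul, hca (n+1)]
    ring

lemma key_toReal : ∀ X : ℝ, 0 ≤ X → ((ENNReal.ofReal X)^(1/2:ℝ)).toReal = X^(1/2:ℝ) := by
  intro X hX
  rcases eq_or_lt_of_le hX with h | h
  · rw [← h]
    simp [ENNReal.zero_rpow_of_pos (by norm_num : (0:ℝ) < 1/2),
      Real.zero_rpow (by norm_num : (1/2:ℝ) ≠ 0)]
  · rw [ENNReal.ofReal_rpow_of_pos h, ENNReal.toReal_ofReal (Real.rpow_nonneg hX _)]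

/-- The norm of the operator on `H_α` representing `D_φ` for `φ(z) = rz`. -/
theorem Dphi_dilation_norm
    (α : ℝ) (hα : α ∈ Set.Ioo (0 : ℝ) 1) (r : ℂ) (hr0 : r ≠ 0) (hr1 : ‖r‖ < 1) :
    ∃ T : Lp ℂ 2 (dirMeasure α) →L[ℂ] Lp ℂ 2 (dirMeasure α),
      (∀ a : Lp ℂ 2 (dirMeasure α), ∀ n : ℕ,
        (T a : ℕ → ℂ) n = ((n : ℂ) + 1) * r ^ n * (a : ℕ → ℂ) (n + 1)) ∧
      ‖T‖ =
        (let x₀ : ℝ := (-(1 + Real.log ‖r‖) -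
            Real.sqrt ((1 + Real.log ‖r‖) ^ 2 - 2 * (3 - α) * Real.log ‖r‖)) /
            (2 * Real.log ‖r‖)
        let f : ℝ → ℝ := fun x => x ^ ((3 - α) / 2) * (x + 1) ^ ((α - 1) / 2) * ‖r‖ ^ (x - 1)
        if f (⌊x₀⌋ : ℝ) < f ((⌊x₀⌋ : ℝ) + 1) then
          ((⌊x₀⌋ : ℝ) + 1) ^ ((3 - α) / 2) * ((⌊x₀⌋ : ℝ) + 2) ^ ((α - 1) / 2) *
            ‖r‖ ^ (⌊x₀⌋ : ℝ)
        else
          (⌊x₀⌋ : ℝ) ^ ((3 - α) / 2) * ((⌊x₀⌋ : ℝ) + 1) ^ ((α - 1) / 2) *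
            ‖r‖ ^ ((⌊x₀⌋ : ℝ) - 1)) := by
  obtain ⟨hα1, hα2⟩ := hα
  have hR0 : 0 < ‖r‖ := norm_pos_iff.mpr hr0
  obtain ⟨m₀, hm₀1, hub, heq⟩ := exists_max hα1 hα2 hR0 hr1
  have hm₀R : (0:ℝ) < (m₀:ℝ) := by exact_mod_cast hm₀1
  set S := Ffun α ‖r‖ (m₀:ℝ) with hSdef
  have hS0 : 0 < S := Ffun_pos hR0 hm₀R
  have hub' : ∀ n : ℕ, (((n:ℝ)+1))^(1-α) * ((((n:ℝ)+1)) * ‖r‖^n)^2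
      ≤ S^2 * ((((n:ℝ)+1)+1))^(1-α) := by
    intro n
    have hx : (0:ℝ) < (n:ℝ)+1 := by positivity
    have hsq := Ffun_sq hα2 hR0 ((n:ℝ)+1) hx
    rw [show ((n:ℝ)+1)-1 = ((n:ℕ):ℝ) by ring, Real.rpow_natCast] at hsq
    rw [hsq]
    have hF : Ffun α ‖r‖ ((n:ℝ)+1) ≤ S := by
      have := hub (n+1) (by omega)
      push_cast at this
      exact this
    have hFpos : 0 ≤ Ffun α ‖r‖ ((n:ℝ)+1) := (Ffun_pos hR0 hx).le
    have h2 : Ffun α ‖r‖ ((n:ℝ)+1)^2 ≤ S^2 := by nlinarith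
    have h3 : (0:ℝ) ≤ (((n:ℝ)+1)+1)^(1-α) := Real.rpow_nonneg (by positivity) _
    nlinarith
  have hmemA : ∀ a : Lp ℂ 2 (dirMeasure α), MemLp (shiftFun r ⇑a) 2 (dirMeasure α) := by
    intro a
    apply memℒp_of_Wsum
    calc Wsum α (shiftFun r ⇑a) ≤ ENNReal.ofReal (S^2) * Wsum α ⇑a :=
          Wsum_shift_le r S hub' _
    _ < ⊤ := ENNReal.mul_lt_top ENNReal.ofReal_lt_top (Wsum_lt_top α a)
  have hbound : ∀ a : Lp ℂ 2 (dirMeasure α), ‖shiftLM α hα2 r hmemA a‖ ≤ S * ‖a‖ := by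
    intro a
    have h0 : shiftLM α hα2 r hmemA a = (hmemA a).toLp _ := rfl
    rw [h0, Lp.norm_toLp _ (hmemA a), eLpNorm_eq_Wsum, norm_Lp_eq α a]
    have h1 : Wsum α (shiftFun r ⇑a) ≤ ENNReal.ofReal (S^2) * Wsum α ⇑a :=
      Wsum_shift_le r S hub' _
    have h2 : (Wsum α (shiftFun r ⇑a))^(1/2:ℝ)
        ≤ (ENNReal.ofReal (S^2) * Wsum α ⇑a)^(1/2:ℝ) :=
      ENNReal.rpow_le_rpow h1 (by norm_num)
    have h3 : (ENNReal.ofReal (S^2) * Wsum α ⇑a)^(1/2:ℝ)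
        = ENNReal.ofReal S * (Wsum α ⇑a)^(1/2:ℝ) := by
      rw [ENNReal.mul_rpow_of_nonneg _ _ (by norm_num : (0:ℝ) ≤ 1/2),
        ENNReal.ofReal_rpow_of_pos (by positivity)]
      congr 2
      rw [← Real.rpow_natCast S 2, ← Real.rpow_mul hS0.le]
      norm_num
    rw [h3] at h2
    have hfin : ENNReal.ofReal S * (Wsum α ⇑a)^(1/2:ℝ) ≠ ⊤ :=
      (ENNReal.mul_lt_top ENNReal.ofReal_lt_top
        (ENNReal.rpow_lt_top_of_nonneg (by norm_num) (Wsum_lt_top α a).ne)).ne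
    have h4 := ENNReal.toReal_mono hfin h2
    rw [ENNReal.toReal_mul, ENNReal.toReal_ofReal hS0.le] at h4
    exact h4
  set T : Lp ℂ 2 (dirMeasure α) →L[ℂ] Lp ℂ 2 (dirMeasure α) :=
    LinearMap.mkContinuous (shiftLM α hα2 r hmemA) S hbound with hTdef
  have hcoe : ∀ a : Lp ℂ 2 (dirMeasure α), (T a : ℕ → ℂ) = shiftFun r ⇑a := by
    intro a
    have h1 : T a = (hmemA a).toLp _ := rfl
    rw [h1]
    funext n
    exact dirMeasure_ae α hα2 (MemLp.coeFn_toLp (hmemA a)) n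
  refine ⟨T, fun a n => by rw [hcoe a]; rfl, ?_⟩
  show ‖T‖ =
    if Ffun α ‖r‖ (⌊xcrit α ‖r‖⌋ : ℝ) < Ffun α ‖r‖ ((⌊xcrit α ‖r‖⌋ : ℝ) + 1) then
      ((⌊xcrit α ‖r‖⌋ : ℝ) + 1) ^ ((3 - α) / 2) * ((⌊xcrit α ‖r‖⌋ : ℝ) + 2) ^ ((α - 1) / 2) *
        ‖r‖ ^ (⌊xcrit α ‖r‖⌋ : ℝ)
    else
      (⌊xcrit α ‖r‖⌋ : ℝ) ^ ((3 - α) / 2) * ((⌊xcrit α ‖r‖⌋ : ℝ) + 1) ^ ((α - 1) / 2) *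
        ‖r‖ ^ ((⌊xcrit α ‖r‖⌋ : ℝ) - 1)
  rw [← heq]
  apply le_antisymm
  · exact LinearMap.mkContinuous_norm_le _ hS0.le _
  · -- lower bound via basis vector
    obtain ⟨m, rfl⟩ : ∃ m, m₀ = m + 1 := ⟨m₀ - 1, by omega⟩
    set e : ℕ → ℂ := fun n => if n = m + 1 then 1 else 0 with hedef
    have hWe : Wsum α e = (((m+1:ℕ) : ℝ≥0∞) + 1)^(1-α) := by
      rw [Wsum, tsum_eq_single (m+1)]
      · simp [hedef]
      · intro n hn
        simp [hedef, hn]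
    have hmemE : MemLp e 2 (dirMeasure α) :=
      memℒp_of_Wsum α e (by
        rw [hWe]
        exact ENNReal.rpow_lt_top_of_nonneg (by linarith) (by simp))
    set eL := hmemE.toLp e with heLdef
    have hcoeE : ∀ n, (eL : ℕ → ℂ) n = e n :=
      dirMeasure_ae α hα2 (MemLp.coeFn_toLp hmemE)
    have hWeL : Wsum α ⇑eL = Wsum α e := by
      rw [Wsum, Wsum]
      exact tsum_congr fun n => by rw [hcoeE n]
    have hsh : shiftFun r ⇑eL = fun n => if n = m then ((m:ℂ)+1) * r^m else 0 := by
      funext n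
      rw [shiftFun]
      rw [hcoeE (n+1)]
      by_cases h : n = m
      · subst h
        simp [hedef]
      · have h2 : n + 1 ≠ m + 1 := by omega
        simp [hedef, h2, h]
    have hnormE : ‖eL‖ = (((m:ℝ)+1+1)^(1-α))^(1/2:ℝ) := by
      rw [norm_Lp_eq, hWeL, hWe, w_ofReal α (m+1), key_toReal _ (by positivity)]
      norm_num
    have hWshift : Wsum α (shiftFun r ⇑eL)
        = ENNReal.ofReal (((m:ℝ)+1)^(1-α) * (((m:ℝ)+1) * ‖r‖^m)^2) := by
      rw [hsh, Wsum, tsum_eq_single m]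
      · rw [w_ofReal α m]
        simp only [if_pos rfl, if_true]
        rw [← (ofReal_norm _).trans (enorm_eq_nnnorm _), ← ENNReal.ofReal_pow (norm_nonneg _),
          ← ENNReal.ofReal_mul (by positivity)]
        congr 1
        rw [norm_mul, norm_pow]
        have hmc : ‖(m:ℂ)+1‖ = (m:ℝ)+1 := by
          rw [show ((m:ℂ)+1) = ((m+1:ℕ):ℂ) by push_cast; ring, Complex.norm_natCast]
          push_cast; ring
        rw [hmc]
      · intro n hn
        simp [hn]
    have hTE : ‖T eL‖ = (((m:ℝ)+1)^(1-α) * (((m:ℝ)+1) * ‖r‖^m)^2)^(1/2:ℝ) := by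
      rw [norm_Lp_eq α (T eL), hcoe eL, hWshift, key_toReal _ (by positivity)]
    have hSE : Ffun α ‖r‖ ((m:ℝ)+1) = S := by
      rw [hSdef]
      congr 1
      push_cast; ring
    have hsq := Ffun_sq hα2 hR0 ((m:ℝ)+1) (by positivity)
    rw [show ((m:ℝ)+1)-1 = ((m:ℕ):ℝ) by ring, Real.rpow_natCast, hSE] at hsq
    have hTE2 : ‖T eL‖ = S * ‖eL‖ := by
      rw [hTE, hnormE, hsq,
        Real.mul_rpow (by positivity) (Real.rpow_nonneg (by positivity) _)]
      congr 1
      rw [← Real.rpow_natCast S 2, ← Real.rpow_mul hS0.le]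
      norm_num
    have hEpos : 0 < ‖eL‖ := by
      rw [hnormE]
      positivity
    have hle := T.le_opNorm eL
    rw [hTE2] at hle
    exact le_of_mul_le_mul_right hle hEpos

end
end

section
/- Let α ∈ (0,1) and let r ∈ ℂ with 0 < |r| < 1. The linear map T_r on H_α given by (T_r a)_n = (n+1) r^n a_{n+1} (the operator representing D_φ for φ(z) = rz) is bounded, and its operator norm equals sup_{n ≥ 1} n^{(3−α)/2}(n+1)^{(α−1)/2}|r|^{n−1}. -/
open Complex MeasureTheory Metric Set ENNReal

noncomputable section

namespace DDil
variable {α : ℝ}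

def c (α : ℝ) (n : ℕ) : ℝ≥0∞ := ((n : ℝ≥0∞) + 1) ^ (1 - α)

lemma c_ne_zero (n : ℕ) : c α n ≠ 0 := by
  simp only [c, ne_eq, ENNReal.rpow_eq_zero_iff]
  push_neg
  constructor
  · intro h; simp [add_eq_zero] at h
  · intro h; rw [ENNReal.add_eq_top] at h
    rcases h with h | h <;> simp at h

lemma c_ne_top (n : ℕ) : c α n ≠ ∞ := by
  simp only [c, ne_eq, ENNReal.rpow_eq_top_iff]
  push_neg
  constructor
  · intro h; simp [add_eq_zero] at h
  · intro h; rw [ENNReal.add_eq_top] at h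
    rcases h with h | h <;> simp at h

lemma dirMeasure_singleton (k : ℕ) : dirMeasure α {k} = c α k := by
  rw [dirMeasure, Measure.sum_apply _ (MeasurableSet.singleton k)]
  rw [tsum_eq_single k]
  · simp [Measure.dirac_apply, c]
  · intro n hn
    simp [Measure.dirac_apply, hn]

lemma ae_eq_iff {f g : ℕ → ℂ} (h : f =ᵐ[dirMeasure α] g) : f = g := by
  funext k
  by_contra hk
  have h0 : dirMeasure α {x | ¬ f x = g x} = 0 := by
    simpa [Filter.EventuallyEq, ae_iff] using h
  have : dirMeasure α {k} ≤ dirMeasure α {x | ¬ f x = g x} :=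
    measure_mono (by simpa using hk)
  rw [dirMeasure_singleton, h0] at this
  exact c_ne_zero k (le_antisymm this zero_le)

lemma dirMeasure_lintegral (g : ℕ → ℝ≥0∞) :
    ∫⁻ n, g n ∂(dirMeasure α) = ∑' n, c α n * g n := by
  rw [dirMeasure, lintegral_sum_measure]
  congr 1
  funext n
  rw [lintegral_smul_measure, lintegral_dirac]
  rfl

def nsq (α : ℝ) (f : ℕ → ℂ) : ℝ≥0∞ := ∑' n, c α n * (‖f n‖₊ : ℝ≥0∞) ^ (2:ℝ)

lemma eLpNorm_dir (f : ℕ → ℂ) :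
    eLpNorm f 2 (dirMeasure α) = (nsq α f) ^ (1/2 : ℝ) := by
  rw [eLpNorm_eq_lintegral_rpow_enorm_toReal two_ne_zero ENNReal.ofNat_ne_top]
  rw [dirMeasure_lintegral]
  norm_num [nsq]
  rfl

end DDil

namespace DDil2
open DDil
variable {α : ℝ} {r : ℂ}

def Smap (r : ℂ) (a : ℕ → ℂ) : ℕ → ℂ := fun n => ((n:ℂ)+1) * r^n * a (n+1)

def Mn (α : ℝ) (r : ℂ) (n : ℕ) : ℝ :=
  ((n : ℝ) + 1) ^ ((3 - α) / 2) * ((n : ℝ) + 2) ^ ((α - 1) / 2) * ‖r‖ ^ n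

lemma Mn_nonneg (n : ℕ) : 0 ≤ Mn α r n := by
  unfold Mn; positivity

lemma c_eq (n : ℕ) : c α n = ENNReal.ofReal (((n:ℝ)+1) ^ (1-α)) := by
  rw [c, ← ENNReal.ofReal_rpow_of_pos (by positivity)]
  congr 1
  rw [ENNReal.ofReal_add (by positivity) zero_le_one, ENNReal.ofReal_natCast,
    ENNReal.ofReal_one]

lemma norm_coef (n : ℕ) : ‖((n:ℂ)+1) * r^n‖ = ((n:ℝ)+1) * ‖r‖^n := by
  rw [norm_mul, norm_pow]
  congr 1
  have : ((n:ℂ)+1) = (((n:ℝ)+1 : ℝ) : ℂ) := by push_cast; ring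
  rw [this, Complex.norm_real, Real.norm_eq_abs, _root_.abs_of_nonneg (by positivity)]

lemma real_id (n : ℕ) :
    ((n:ℝ)+1)^(1-α) * (((n:ℝ)+1) * ‖r‖^n)^2 = (Mn α r n)^2 * ((n:ℝ)+2)^(1-α) := by
  have hx : (0:ℝ) < (n:ℝ)+1 := by positivity
  have hy : (0:ℝ) < (n:ℝ)+2 := by positivity
  unfold Mn
  rw [mul_pow, mul_pow, mul_pow,
    ← Real.rpow_natCast (((n:ℝ)+1) ^ ((3-α)/2)) 2,
    ← Real.rpow_natCast (((n:ℝ)+2) ^ ((α-1)/2)) 2,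
    ← Real.rpow_mul hx.le, ← Real.rpow_mul hy.le]
  have e1 : ((3-α)/2 * (2:ℕ) : ℝ) = 3-α := by push_cast; ring
  have e2 : ((α-1)/2 * (2:ℕ) : ℝ) = α-1 := by push_cast; ring
  rw [e1, e2]
  have e3 : ((n:ℝ)+2)^(α-1) * ((n:ℝ)+2)^(1-α) = 1 := by
    rw [← Real.rpow_add hy]; norm_num
  have e4 : ((n:ℝ)+1)^(1-α) * ((n:ℝ)+1)^(2:ℕ) = ((n:ℝ)+1)^(3-α) := by
    rw [← Real.rpow_natCast ((n:ℝ)+1) 2, ← Real.rpow_add hx]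
    congr 1; push_cast; ring
  calc ((n:ℝ)+1)^(1-α) * (((n:ℝ)+1)^(2:ℕ) * (‖r‖^n)^(2:ℕ))
      = (((n:ℝ)+1)^(1-α) * ((n:ℝ)+1)^(2:ℕ)) * (‖r‖^n)^(2:ℕ) := by ring
    _ = ((n:ℝ)+1)^(3-α) * (‖r‖^n)^(2:ℕ) := by rw [e4]
    _ = ((n:ℝ)+1)^(3-α) * (‖r‖^n)^(2:ℕ) * (((n:ℝ)+2)^(α-1) * ((n:ℝ)+2)^(1-α)) := by
        rw [e3]; ring
    _ = ((n:ℝ)+1)^(3-α) * ((n:ℝ)+2)^(α-1) * (‖r‖^n)^(2:ℕ) * ((n:ℝ)+2)^(1-α) := by ring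

lemma term_eq (a : ℕ → ℂ) (n : ℕ) :
    c α n * (‖Smap r a n‖₊ : ℝ≥0∞) ^ (2:ℝ) =
      ENNReal.ofReal ((Mn α r n)^2) * (c α (n+1) * (‖a (n+1)‖₊ : ℝ≥0∞) ^ (2:ℝ)) := by
  have hs : Smap r a n = (((n:ℂ)+1) * r^n) * a (n+1) := by rfl
  rw [hs, nnnorm_mul, ENNReal.coe_mul,
    ENNReal.mul_rpow_of_nonneg _ _ (by norm_num : (0:ℝ) ≤ 2)]
  have hofr : ∀ x : ℂ, (‖x‖₊ : ℝ≥0∞) = ENNReal.ofReal ‖x‖ := fun x =>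
    (ofReal_norm_eq_enorm x).symm
  rw [hofr (((n:ℂ)+1) * r^n)]
  rw [ENNReal.ofReal_rpow_of_nonneg (norm_nonneg _) (by norm_num : (0:ℝ) ≤ 2)]
  rw [c_eq n, c_eq (n+1)]
  rw [show ((‖((n:ℂ)+1) * r^n‖) ^ (2:ℝ)) = ‖((n:ℂ)+1) * r^n‖^2 by
    rw [← Real.rpow_natCast (‖((n:ℂ)+1) * r^n‖) 2]; norm_num]
  have key : ENNReal.ofReal (((n:ℝ)+1) ^ (1-α)) * ENNReal.ofReal (‖((n:ℂ)+1) * r^n‖^2)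
      = ENNReal.ofReal ((Mn α r n)^2) * ENNReal.ofReal ((((n+1:ℕ):ℝ)+1) ^ (1-α)) := by
    rw [← ENNReal.ofReal_mul (by positivity), ← ENNReal.ofReal_mul (by positivity)]
    congr 1
    rw [norm_coef, real_id]
    push_cast
    rw [show ((n:ℝ)+1+1) = ((n:ℝ)+2) from by ring]
  calc ENNReal.ofReal (((n:ℝ)+1) ^ (1-α)) * (ENNReal.ofReal (‖((n:ℂ)+1) * r^n‖^2) * (‖a (n+1)‖₊ : ℝ≥0∞) ^ (2:ℝ))
      = (ENNReal.ofReal (((n:ℝ)+1) ^ (1-α)) * ENNReal.ofReal (‖((n:ℂ)+1) * r^n‖^2)) * (‖a (n+1)‖₊ : ℝ≥0∞) ^ (2:ℝ) := by ring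
    _ = (ENNReal.ofReal ((Mn α r n)^2) * ENNReal.ofReal ((((n+1:ℕ):ℝ)+1) ^ (1-α))) * (‖a (n+1)‖₊ : ℝ≥0∞) ^ (2:ℝ) := by rw [key]
    _ = _ := by ring

def Msup (α : ℝ) (r : ℂ) : ℝ := ⨆ n, Mn α r n

lemma Mn_le_bound (hα : α ∈ Set.Ioo (0:ℝ) 1) (n : ℕ) :
    Mn α r n ≤ ((n:ℝ)+1)^2 * ‖r‖^n := by
  have hx : (1:ℝ) ≤ (n:ℝ)+1 := by linarith [Nat.cast_nonneg (α := ℝ) n]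
  have hy : (1:ℝ) ≤ (n:ℝ)+2 := by linarith [Nat.cast_nonneg (α := ℝ) n]
  have hA : ((n:ℝ)+1)^((3-α)/2) ≤ ((n:ℝ)+1)^(2:ℝ) :=
    Real.rpow_le_rpow_of_exponent_le hx (by linarith [hα.1])
  have hB : ((n:ℝ)+2)^((α-1)/2) ≤ 1 :=
    Real.rpow_le_one_of_one_le_of_nonpos hy (by linarith [hα.2])
  have h2 : ((n:ℝ)+1)^(2:ℝ) = ((n:ℝ)+1)^2 := by
    rw [← Real.rpow_natCast ((n:ℝ)+1) 2]; norm_num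
  calc Mn α r n = (((n:ℝ)+1)^((3-α)/2) * ((n:ℝ)+2)^((α-1)/2)) * ‖r‖^n := by
        unfold Mn; ring
    _ ≤ (((n:ℝ)+1)^(2:ℝ) * 1) * ‖r‖^n := by
        apply mul_le_mul_of_nonneg_right _ (by positivity)
        exact mul_le_mul hA hB (by positivity) (by positivity)
    _ = ((n:ℝ)+1)^2 * ‖r‖^n := by rw [h2]; ring

lemma Mn_bddAbove (hα : α ∈ Set.Ioo (0:ℝ) 1) (hr1 : ‖r‖ < 1) :
    BddAbove (Set.range (Mn α r)) := by
  have hr' : ‖(‖r‖)‖ < 1 := by rwa [Real.norm_eq_abs, _root_.abs_of_nonneg (norm_nonneg r)]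
  have h2 := summable_pow_mul_geometric_of_norm_lt_one (R := ℝ) 2 hr'
  have h1 := summable_pow_mul_geometric_of_norm_lt_one (R := ℝ) 1 hr'
  have h0 := summable_pow_mul_geometric_of_norm_lt_one (R := ℝ) 0 hr'
  have hs : Summable (fun n : ℕ => ((n:ℝ)+1)^2 * ‖r‖^n) := by
    refine ((h2.add ((h1.mul_left 2).add h0)).congr fun n => ?_)
    push_cast; ring
  exact BddAbove.range_mono _ (Mn_le_bound hα) hs.tendsto_atTop_zero.bddAbove_range

lemma Mn_pos (hr0 : r ≠ 0) (n : ℕ) : 0 < Mn α r n := by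
  have : 0 < ‖r‖ := norm_pos_iff.mpr hr0
  unfold Mn; positivity

lemma Msup_pos (hα : α ∈ Set.Ioo (0:ℝ) 1) (hr0 : r ≠ 0) (hr1 : ‖r‖ < 1) :
    0 < Msup α r :=
  lt_of_lt_of_le (Mn_pos hr0 0) (le_ciSup (Mn_bddAbove hα hr1) 0)

lemma nsq_Smap (a : ℕ → ℂ) :
    nsq α (Smap r a) =
      ∑' n, ENNReal.ofReal ((Mn α r n)^2) * (c α (n+1) * (‖a (n+1)‖₊ : ℝ≥0∞) ^ (2:ℝ)) :=
  tsum_congr (term_eq a)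

lemma nsq_Smap_le (hα : α ∈ Set.Ioo (0:ℝ) 1) (hr1 : ‖r‖ < 1) (a : ℕ → ℂ) :
    nsq α (Smap r a) ≤ ENNReal.ofReal ((Msup α r)^2) * nsq α a := by
  rw [nsq_Smap]
  calc ∑' n, ENNReal.ofReal ((Mn α r n)^2) * (c α (n+1) * (‖a (n+1)‖₊ : ℝ≥0∞) ^ (2:ℝ))
      ≤ ∑' n, ENNReal.ofReal ((Msup α r)^2) * (c α (n+1) * (‖a (n+1)‖₊ : ℝ≥0∞) ^ (2:ℝ)) := by
        refine ENNReal.tsum_le_tsum fun n => mul_le_mul_left (ENNReal.ofReal_le_ofReal ?_) _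
        exact pow_le_pow_left₀ (Mn_nonneg n) (le_ciSup (Mn_bddAbove hα hr1) n) 2
    _ = ENNReal.ofReal ((Msup α r)^2) * ∑' n, (c α (n+1) * (‖a (n+1)‖₊ : ℝ≥0∞) ^ (2:ℝ)) :=
        ENNReal.tsum_mul_left
    _ ≤ ENNReal.ofReal ((Msup α r)^2) * nsq α a := by
        refine mul_le_mul_right ?_ _
        exact tsum_comp_le_tsum_of_injective Nat.succ_injective
          (fun k => c α k * (‖a k‖₊ : ℝ≥0∞) ^ (2:ℝ))

lemma ofReal_sq_rpow_half (M : ℝ) (hM : 0 < M) :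
    (ENNReal.ofReal (M^2)) ^ (1/2 : ℝ) = ENNReal.ofReal M := by
  rw [show M^2 = M^(2:ℕ) from rfl, ← Real.rpow_natCast M 2,
    ← ENNReal.ofReal_rpow_of_pos hM, ← ENNReal.rpow_mul]
  norm_num

lemma elp_bound (hα : α ∈ Set.Ioo (0:ℝ) 1) (hr0 : r ≠ 0) (hr1 : ‖r‖ < 1) (a : ℕ → ℂ) :
    eLpNorm (Smap r a) 2 (dirMeasure α) ≤
      ENNReal.ofReal (Msup α r) * eLpNorm a 2 (dirMeasure α) := by
  rw [eLpNorm_dir, eLpNorm_dir]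
  calc (nsq α (Smap r a)) ^ (1/2:ℝ)
      ≤ (ENNReal.ofReal ((Msup α r)^2) * nsq α a) ^ (1/2:ℝ) :=
        ENNReal.rpow_le_rpow (nsq_Smap_le hα hr1 a) (by norm_num)
    _ = (ENNReal.ofReal ((Msup α r)^2)) ^ (1/2:ℝ) * (nsq α a) ^ (1/2:ℝ) :=
        ENNReal.mul_rpow_of_nonneg _ _ (by norm_num)
    _ = ENNReal.ofReal (Msup α r) * (nsq α a) ^ (1/2:ℝ) := by
        rw [ofReal_sq_rpow_half _ (Msup_pos hα hr0 hr1)]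

lemma mem_Smap (hα : α ∈ Set.Ioo (0:ℝ) 1) (hr0 : r ≠ 0) (hr1 : ‖r‖ < 1) {a : ℕ → ℂ}
    (ha : MemLp a 2 (dirMeasure α)) : MemLp (Smap r a) 2 (dirMeasure α) :=
  ⟨(measurable_of_countable _).aestronglyMeasurable,
    lt_of_le_of_lt (elp_bound hα hr0 hr1 a)
      (ENNReal.mul_lt_top ENNReal.ofReal_lt_top ha.2)⟩

end DDil2

namespace DDil3
open DDil DDil2
variable {α : ℝ} {r : ℂ}

def ebasis (k : ℕ) : ℕ → ℂ := fun j => if j = k then 1 else 0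

lemma nsq_ebasis (k : ℕ) : nsq α (ebasis k) = c α k := by
  unfold nsq
  rw [tsum_eq_single k]
  · simp [ebasis]
  · intro n hn
    simp [ebasis, hn, ENNReal.zero_rpow_of_pos]

lemma mem_ebasis (k : ℕ) : MemLp (ebasis k) 2 (dirMeasure α) :=
  ⟨(measurable_of_countable _).aestronglyMeasurable, by
    rw [eLpNorm_dir, nsq_ebasis]
    exact ENNReal.rpow_lt_top_of_nonneg (by norm_num) (c_ne_top k)⟩

lemma nsq_Smap_ebasis (m : ℕ) :
    nsq α (Smap r (ebasis (m+1))) = ENNReal.ofReal ((Mn α r m)^2) * c α (m+1) := by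
  rw [nsq_Smap, tsum_eq_single m]
  · simp [ebasis]
  · intro n hn
    have h : n + 1 ≠ m + 1 := by omega
    simp [ebasis, h, hn, ENNReal.zero_rpow_of_pos]

lemma elp_Smap_ebasis (hr0 : r ≠ 0) (m : ℕ) :
    eLpNorm (Smap r (ebasis (m+1))) 2 (dirMeasure α)
      = ENNReal.ofReal (Mn α r m) * eLpNorm (ebasis (m+1)) 2 (dirMeasure α) := by
  rw [eLpNorm_dir, eLpNorm_dir, nsq_Smap_ebasis, nsq_ebasis,
    ENNReal.mul_rpow_of_nonneg _ _ (by norm_num : (0:ℝ) ≤ 1/2),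
    ofReal_sq_rpow_half _ (Mn_pos hr0 m)]

end DDil3

open DDil DDil2 DDil3

/-- The operator on `H_α` representing `D_φ` for `φ(z) = rz` is bounded with
norm `sup_{n ≥ 1} n^{(3-α)/2}(n+1)^{(α-1)/2}|r|^{n-1}` (the supremum is reindexed by
`n ↦ n+1` over all `n : ℕ`). -/
theorem Dphi_dilation_norm_sup
    (α : ℝ) (hα : α ∈ Set.Ioo (0 : ℝ) 1) (r : ℂ) (hr0 : r ≠ 0) (hr1 : ‖r‖ < 1) :
    ∃ T : Lp ℂ 2 (dirMeasure α) →L[ℂ] Lp ℂ 2 (dirMeasure α),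
      (∀ a : Lp ℂ 2 (dirMeasure α), ∀ n : ℕ,
        (T a : ℕ → ℂ) n = ((n : ℂ) + 1) * r ^ n * (a : ℕ → ℂ) (n + 1)) ∧
      ‖T‖ = ⨆ n : ℕ,
        ((n : ℝ) + 1) ^ ((3 - α) / 2) * ((n : ℝ) + 2) ^ ((α - 1) / 2) * ‖r‖ ^ n := by
  have memS : ∀ a : Lp ℂ 2 (dirMeasure α), MemLp (Smap r ((a : ℕ → ℂ))) 2 (dirMeasure α) :=
    fun a => mem_Smap hα hr0 hr1 (Lp.memLp a)
  let Tlin : Lp ℂ 2 (dirMeasure α) →ₗ[ℂ] Lp ℂ 2 (dirMeasure α) :=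
  { toFun := fun a => (memS a).toLp _
    map_add' := by
      intro a b
      have h1 : ((a + b : Lp ℂ 2 (dirMeasure α)) : ℕ → ℂ) = (a : ℕ → ℂ) + (b : ℕ → ℂ) :=
        ae_eq_iff (Lp.coeFn_add a b)
      have h2 : Smap r ((a + b : Lp ℂ 2 (dirMeasure α)) : ℕ → ℂ)
          = Smap r (a : ℕ → ℂ) + Smap r (b : ℕ → ℂ) := by
        funext n; simp only [Smap, h1, Pi.add_apply]; ring
      rw [show (memS (a+b)).toLp _
          = ((memS a).add (memS b)).toLp (Smap r (a : ℕ → ℂ) + Smap r (b : ℕ → ℂ)) from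
        MemLp.toLp_congr _ _ (by rw [h2])]
      exact MemLp.toLp_add _ _
    map_smul' := by
      intro m a
      have h1 : ((m • a : Lp ℂ 2 (dirMeasure α)) : ℕ → ℂ) = m • (a : ℕ → ℂ) :=
        ae_eq_iff (Lp.coeFn_smul m a)
      have h2 : Smap r ((m • a : Lp ℂ 2 (dirMeasure α)) : ℕ → ℂ)
          = m • Smap r (a : ℕ → ℂ) := by
        funext n; simp only [Smap, h1, Pi.smul_apply, smul_eq_mul]; ring
      rw [show (memS (m • a)).toLp _
          = ((memS a).const_smul m).toLp (m • Smap r (a : ℕ → ℂ)) from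
        MemLp.toLp_congr _ _ (by rw [h2])]
      exact MemLp.toLp_const_smul m _ }
  have hbound : ∀ a : Lp ℂ 2 (dirMeasure α), ‖Tlin a‖ ≤ Msup α r * ‖a‖ := by
    intro a
    have h1 : ‖Tlin a‖ = (eLpNorm (Smap r (a : ℕ → ℂ)) 2 (dirMeasure α)).toReal :=
      Lp.norm_toLp (Smap r (a : ℕ → ℂ)) (memS a)
    have h2 : ‖a‖ = (eLpNorm (a : ℕ → ℂ) 2 (dirMeasure α)).toReal := Lp.norm_def a
    have h4 : (ENNReal.ofReal (Msup α r) * eLpNorm (a : ℕ → ℂ) 2 (dirMeasure α)) ≠ ⊤ :=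
      ENNReal.mul_ne_top ENNReal.ofReal_ne_top (Lp.memLp a).2.ne
    rw [h1, h2]
    calc (eLpNorm (Smap r (a : ℕ → ℂ)) 2 (dirMeasure α)).toReal
        ≤ (ENNReal.ofReal (Msup α r) * eLpNorm (a : ℕ → ℂ) 2 (dirMeasure α)).toReal :=
          ENNReal.toReal_mono h4 (elp_bound hα hr0 hr1 (a : ℕ → ℂ))
      _ = Msup α r * (eLpNorm (a : ℕ → ℂ) 2 (dirMeasure α)).toReal := by
          rw [ENNReal.toReal_mul, ENNReal.toReal_ofReal (Msup_pos hα hr0 hr1).le]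
  refine ⟨Tlin.mkContinuous (Msup α r) hbound, ?_, ?_⟩
  · intro a n
    have hc : ((Tlin.mkContinuous (Msup α r) hbound) a : ℕ → ℂ) = Smap r (a : ℕ → ℂ) :=
      ae_eq_iff ((memS a).coeFn_toLp)
    rw [hc]; rfl
  · have hrw : (⨆ n : ℕ, ((n:ℝ)+1) ^ ((3-α)/2) * ((n:ℝ)+2) ^ ((α-1)/2) * ‖r‖^n)
        = Msup α r := rfl
    rw [hrw]
    apply le_antisymm
    · exact Tlin.mkContinuous_norm_le (Msup_pos hα hr0 hr1).le hbound
    · apply ciSup_le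
      intro m
      set T := Tlin.mkContinuous (Msup α r) hbound with hT
      set e : Lp ℂ 2 (dirMeasure α) := (mem_ebasis (α := α) (m+1)).toLp (ebasis (m+1)) with he
      have hce : (e : ℕ → ℂ) = ebasis (m+1) := ae_eq_iff (MemLp.coeFn_toLp _)
      have hne : ‖e‖ = ((c α (m+1)) ^ (1/2:ℝ)).toReal := by
        rw [he, Lp.norm_toLp, eLpNorm_dir, nsq_ebasis]
      have hepos : 0 < ‖e‖ := by
        rw [hne]
        exact ENNReal.toReal_pos
          (ENNReal.rpow_pos ((c_ne_zero (m+1)).bot_lt) (c_ne_top (m+1))).ne'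
          (ENNReal.rpow_ne_top_of_nonneg (by norm_num) (c_ne_top (m+1)))
      have hTe : ‖T e‖ = Mn α r m * ‖e‖ := by
        have h1 : ‖T e‖ = (eLpNorm (Smap r ((e : ℕ → ℂ))) 2 (dirMeasure α)).toReal :=
          Lp.norm_toLp (Smap r ((e : ℕ → ℂ))) (memS e)
        rw [h1, hce, elp_Smap_ebasis hr0 m, ENNReal.toReal_mul,
          ENNReal.toReal_ofReal (Mn_pos hr0 m).le]
        congr 1
        rw [he, Lp.norm_toLp]
      have hle : ‖T e‖ ≤ ‖T‖ * ‖e‖ := T.le_opNorm e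
      rw [hTe] at hle
      exact le_of_mul_le_mul_right hle hepos

end
end

section
/- Let 0 < α < γ < 1 and let φ be a holomorphic self-map of 𝔻 with φ(0) = 0. Then for every w ∈ 𝔻 with w ≠ 0, N_{φ,γ}(w)/(1−|w|²)^{γ+2} ≤ N_{φ,α}(w)/(1−|w|²)^{α+2} (as an inequality in [0,∞]). -/
open Complex MeasureTheory Metric Set ENNReal

noncomputable section

/-- For `0 < α < γ < 1` and `φ(0) = 0`, the ratio
`N_{φ,γ}(w)/(1-|w|²)^{γ+2}` is dominated by `N_{φ,α}(w)/(1-|w|²)^{α+2}`. -/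
theorem nevanlinna_ratio_mono
    (α γ : ℝ) (hα : 0 < α) (hαγ : α < γ) (hγ : γ < 1)
    (φ : ℂ → ℂ) (hφ_holo : DifferentiableOn ℂ φ unitDisc)
    (hφ_maps : Set.MapsTo φ unitDisc unitDisc) (hφ0 : φ 0 = 0)
    (w : ℂ) (hw : w ∈ unitDisc) (hw0 : w ≠ 0) :
    nevanlinna γ φ w / ENNReal.ofReal ((1 - ‖w‖ ^ 2) ^ (γ + 2)) ≤
      nevanlinna α φ w / ENNReal.ofReal ((1 - ‖w‖ ^ 2) ^ (α + 2)) := by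
  have hball : unitDisc = Metric.ball (0 : ℂ) 1 := by
    ext z; simp [unitDisc, Metric.mem_ball, dist_zero_right]
  have hw1 : ‖w‖ < 1 := hw
  have hA : (0:ℝ) < 1 - ‖w‖ ^ 2 := by nlinarith [norm_nonneg w]
  -- Schwarz: any preimage z of w has ‖w‖ ≤ ‖z‖
  have schwarz : ∀ z : ℂ, z ∈ unitDisc → φ z = w → ‖w‖ ≤ ‖z‖ := by
    intro z hz hzw
    rw [hball] at hφ_holo hφ_maps
    have := Complex.norm_le_norm_of_mapsTo_ball hφ_holo (hφ_maps.mono_right ball_subset_closedBall) hφ0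
      (z := z) (by exact hz)
    simpa [hzw] using this
  -- key termwise inequality
  have key : nevanlinna γ φ w ≤
      ENNReal.ofReal ((1 - ‖w‖ ^ 2) ^ (γ - α)) * nevanlinna α φ w := by
    rw [nevanlinna, nevanlinna, ← ENNReal.tsum_mul_left]
    refine ENNReal.tsum_le_tsum fun z => ?_
    rcases eq_or_ne (vanishingOrder φ w (z : ℂ)) 0 with h0 | h0
    · simp [h0]
    · -- then φ z = w
      have hzw : φ (z : ℂ) = w := by
        by_contra hne
        apply h0
        unfold vanishingOrder
        split_ifs with h
        · have : analyticOrderAt (fun ζ => φ ζ - w) (z : ℂ) = (0 : ℕ) := h.analyticOrderAt_eq_natCast.mpr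
            ⟨fun ζ => φ ζ - w, h, sub_ne_zero.mpr hne, by
              filter_upwards with ζ; simp⟩
          simpa using this
        · rfl
      have hz1 : ‖(z : ℂ)‖ < 1 := z.2
      have hle : ‖w‖ ≤ ‖(z : ℂ)‖ := schwarz z z.2 hzw
      have ht : (0:ℝ) < 1 - ‖(z : ℂ)‖ ^ 2 := by nlinarith [norm_nonneg (z : ℂ)]
      have hts : 1 - ‖(z : ℂ)‖ ^ 2 ≤ 1 - ‖w‖ ^ 2 := by nlinarith [norm_nonneg w]
      have hreal : (1 - ‖(z : ℂ)‖ ^ 2) ^ γ ≤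
          (1 - ‖w‖ ^ 2) ^ (γ - α) * (1 - ‖(z : ℂ)‖ ^ 2) ^ α := by
        have : (1 - ‖(z : ℂ)‖ ^ 2) ^ γ
            = (1 - ‖(z : ℂ)‖ ^ 2) ^ (γ - α) * (1 - ‖(z : ℂ)‖ ^ 2) ^ α := by
          rw [← Real.rpow_add ht]; ring_nf
        rw [this]
        exact mul_le_mul_of_nonneg_right
          (Real.rpow_le_rpow ht.le hts (by linarith)) (Real.rpow_nonneg ht.le _)
      calc (vanishingOrder φ w (z : ℂ) : ℝ≥0∞) *
            ENNReal.ofReal ((1 - ‖(z : ℂ)‖ ^ 2) ^ γ)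
          ≤ (vanishingOrder φ w (z : ℂ) : ℝ≥0∞) *
            (ENNReal.ofReal ((1 - ‖w‖ ^ 2) ^ (γ - α)) *
              ENNReal.ofReal ((1 - ‖(z : ℂ)‖ ^ 2) ^ α)) := by
            gcongr
            rw [← ENNReal.ofReal_mul (Real.rpow_nonneg hA.le _)]
            exact ENNReal.ofReal_le_ofReal hreal
        _ = ENNReal.ofReal ((1 - ‖w‖ ^ 2) ^ (γ - α)) *
            ((vanishingOrder φ w (z : ℂ) : ℝ≥0∞) *
              ENNReal.ofReal ((1 - ‖(z : ℂ)‖ ^ 2) ^ α)) := by ring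
  -- now the division step
  have hne : ENNReal.ofReal ((1 - ‖w‖ ^ 2) ^ (γ + 2)) ≠ 0 :=
    (ENNReal.ofReal_pos.mpr (Real.rpow_pos_of_pos hA _)).ne'
  have hnetop : ENNReal.ofReal ((1 - ‖w‖ ^ 2) ^ (γ + 2)) ≠ ⊤ := ENNReal.ofReal_ne_top
  calc nevanlinna γ φ w / ENNReal.ofReal ((1 - ‖w‖ ^ 2) ^ (γ + 2))
      ≤ ENNReal.ofReal ((1 - ‖w‖ ^ 2) ^ (γ - α)) * nevanlinna α φ w /
        ENNReal.ofReal ((1 - ‖w‖ ^ 2) ^ (γ + 2)) := by gcongr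
    _ = nevanlinna α φ w * (ENNReal.ofReal ((1 - ‖w‖ ^ 2) ^ (γ - α)) /
        ENNReal.ofReal ((1 - ‖w‖ ^ 2) ^ (γ + 2))) := by
        rw [mul_comm, mul_div_assoc]
    _ = nevanlinna α φ w / ENNReal.ofReal ((1 - ‖w‖ ^ 2) ^ (α + 2)) := by
        rw [← ENNReal.ofReal_div_of_pos (Real.rpow_pos_of_pos hA _)]
        have : (1 - ‖w‖ ^ 2) ^ (γ - α) / (1 - ‖w‖ ^ 2) ^ (γ + 2)
            = ((1 - ‖w‖ ^ 2) ^ (α + 2))⁻¹ := by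
          rw [← Real.rpow_sub hA, ← Real.rpow_neg hA.le]
          ring_nf
        rw [this, ENNReal.ofReal_inv_of_pos (Real.rpow_pos_of_pos hA _),
          ← div_eq_mul_inv]


end
end

section
/- Let δ ∈ (0,1) and define the lens map τ_δ(w) = (σ(w)^δ − 1)/(σ(w)^δ + 1), where σ(w) = (1+w)/(1−w) and σ(w)^δ is taken with the principal branch of the power. Then τ_δ is an injective holomorphic self-map of 𝔻 (i.e., |τ_δ(w)| < 1 for all w ∈ 𝔻 and τ_δ is injective on 𝔻), and there exists a constant c > 0 such that 1 − |τ_δ(w)|² ≥ c (1−|w|²)^δ for all w ∈ 𝔻. -/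
open Complex MeasureTheory Metric Set ENNReal

noncomputable section

/-- The lens map `τ_δ(w) = (σ(w)^δ - 1)/(σ(w)^δ + 1)`, `σ(w) = (1+w)/(1-w)`, with the
principal branch of the complex power. -/
def lensMap (δ : ℝ) (w : ℂ) : ℂ :=
  (((1 + w) / (1 - w)) ^ (δ : ℂ) - 1) / (((1 + w) / (1 - w)) ^ (δ : ℂ) + 1)

namespace LensAux

lemma one_sub_ne {w : ℂ} (hw : ‖w‖ < 1) : (1:ℂ) - w ≠ 0 := by
  intro h
  have : w = 1 := by linear_combination -h
  rw [this] at hw; simp at hw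

lemma sigma_re {w : ℂ} (hw : ‖w‖ < 1) :
    (((1:ℂ) + w) / (1 - w)).re = (1 - ‖w‖^2) / ‖1 - w‖^2 := by
  have h := one_sub_ne hw
  have hns : (0:ℝ) < Complex.normSq (1 - w) := Complex.normSq_pos.2 h
  rw [Complex.div_re, ← add_div]
  simp only [Complex.sq_norm, Complex.add_re, Complex.add_im,
    Complex.sub_re, Complex.sub_im, Complex.one_re, Complex.one_im, Complex.normSq_apply]
  field_simp
  ring

lemma sigma_re_pos {w : ℂ} (hw : ‖w‖ < 1) : 0 < (((1:ℂ) + w) / (1 - w)).re := by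
  rw [sigma_re hw]
  have h := one_sub_ne hw
  have h2 : (0:ℝ) < ‖(1:ℂ) - w‖ := norm_pos_iff.2 h
  have h3 : ‖w‖^2 < 1 := by nlinarith [norm_nonneg w]
  apply div_pos (by linarith) (by positivity)

lemma add_one_ne {u : ℂ} (hu : 0 < u.re) : u + 1 ≠ 0 := by
  intro h
  have := congrArg Complex.re h
  simp at this
  linarith

lemma ne_zero_of_re_pos {u : ℂ} (hu : 0 < u.re) : u ≠ 0 := by
  intro h; rw [h] at hu; simp at hu

lemma mobius_one_sub_sq {u : ℂ} (hu : 0 < u.re) :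
    1 - ‖(u - 1)/(u + 1)‖^2 = 4 * u.re / ‖u + 1‖^2 := by
  have h1 : u + 1 ≠ 0 := add_one_ne hu
  have hns : (0:ℝ) < ‖u + 1‖^2 := by
    have : (0:ℝ) < ‖u + 1‖ := norm_pos_iff.2 h1
    positivity
  rw [norm_div, div_pow, eq_div_iff hns.ne', sub_mul, one_mul, div_mul_cancel₀ _ hns.ne']
  simp only [Complex.sq_norm, Complex.normSq_apply, Complex.add_re,
    Complex.add_im, Complex.sub_re, Complex.sub_im, Complex.one_re, Complex.one_im]
  ring

lemma cpow_re_eq {ζ : ℂ} (hζ : ζ ≠ 0) (δ : ℝ) :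
    (ζ ^ (δ:ℂ)).re = ‖ζ‖ ^ δ * Real.cos (ζ.arg * δ) := by
  rw [Complex.cpow_def_of_ne_zero hζ, Complex.exp_re]
  have h1 : (Complex.log ζ * (δ:ℂ)).re = Real.log ‖ζ‖ * δ := by
    simp [Complex.mul_re, Complex.log_re]
  have h2 : (Complex.log ζ * (δ:ℂ)).im = ζ.arg * δ := by
    simp [Complex.mul_im, Complex.log_im]
  rw [h1, h2, Real.rpow_def_of_pos (norm_pos_iff.2 hζ)]

lemma cpow_abs_eq {ζ : ℂ} (hζ : ζ ≠ 0) (δ : ℝ) : ‖ζ ^ (δ:ℂ)‖ = ‖ζ‖ ^ δ := by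
  rw [Complex.norm_cpow_real]

lemma cpow_inj {δ : ℝ} (hδ0 : 0 < δ) (hδ1 : δ < 1) {z w : ℂ}
    (hz : 0 < z.re) (hw : 0 < w.re) (h : z ^ (δ:ℂ) = w ^ (δ:ℂ)) : z = w := by
  have hz0 : z ≠ 0 := ne_zero_of_re_pos hz
  have hw0 : w ≠ 0 := ne_zero_of_re_pos hw
  rw [Complex.cpow_def_of_ne_zero hz0, Complex.cpow_def_of_ne_zero hw0,
    Complex.exp_eq_exp_iff_exists_int] at h
  obtain ⟨n, hn⟩ := h
  have hn' : Complex.log z * (δ:ℂ) = Complex.log w * (δ:ℂ) + (((2*Real.pi*(n:ℝ)) : ℝ):ℂ) * I := by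
    rw [hn]; push_cast; ring
  have him : z.arg * δ = w.arg * δ + 2*Real.pi*(n:ℝ) := by
    have h2 := congrArg Complex.im hn'
    simp only [Complex.mul_im, Complex.add_im, Complex.log_im, Complex.log_re,
      Complex.ofReal_re, Complex.ofReal_im, Complex.I_re, Complex.I_im] at h2
    linear_combination h2
  have haz := abs_lt.1 (Complex.abs_arg_lt_pi_div_two_iff.2 (Or.inl hz))
  have haw := abs_lt.1 (Complex.abs_arg_lt_pi_div_two_iff.2 (Or.inl hw))
  have hπ := Real.pi_pos
  have hn0 : n = 0 := by
    by_contra h0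
    have hd1 : (z.arg - w.arg) * δ < Real.pi := by nlinarith [haz.2, haw.1]
    have hd2 : -Real.pi < (z.arg - w.arg) * δ := by nlinarith [haz.1, haw.2]
    rcases lt_or_gt_of_ne h0 with hlt | hgt
    · have : (n:ℝ) ≤ -1 := by exact_mod_cast Int.le_sub_one_of_lt hlt
      nlinarith [him]
    · have : (1:ℝ) ≤ (n:ℝ) := by exact_mod_cast hgt
      nlinarith [him]
  have hδc : ((δ:ℂ)) ≠ 0 := Complex.ofReal_ne_zero.2 hδ0.ne'
  have hlog : Complex.log z = Complex.log w := by
    apply mul_right_cancel₀ hδc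
    rw [hn0] at hn
    push_cast at hn
    linear_combination hn
  calc z = Complex.exp (Complex.log z) := (Complex.exp_log hz0).symm
    _ = Complex.exp (Complex.log w) := by rw [hlog]
    _ = w := Complex.exp_log hw0


lemma cosδ_pos {δ : ℝ} (hδ0 : 0 < δ) (hδ1 : δ < 1) : 0 < Real.cos (δ*(Real.pi/2)) := by
  have hπ := Real.pi_pos
  apply Real.cos_pos_of_mem_Ioo
  constructor <;> nlinarith

lemma u_re_pos {δ : ℝ} (hδ0 : 0 < δ) (hδ1 : δ < 1) {ζ : ℂ} (hζre : 0 < ζ.re) :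
    0 < (ζ ^ (δ:ℂ)).re := by
  have hζ0 : ζ ≠ 0 := ne_zero_of_re_pos hζre
  have hr : 0 < ‖ζ‖ := norm_pos_iff.2 hζ0
  have harg := abs_lt.1 (Complex.abs_arg_lt_pi_div_two_iff.2 (Or.inl hζre))
  have hπ := Real.pi_pos
  rw [cpow_re_eq hζ0 δ]
  apply mul_pos (Real.rpow_pos_of_pos hr δ)
  apply Real.cos_pos_of_mem_Ioo
  constructor <;> nlinarith

lemma cos_le {δ : ℝ} (hδ0 : 0 < δ) (hδ1 : δ < 1) {ζ : ℂ} (hζre : 0 < ζ.re) :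
    Real.cos (δ*(Real.pi/2)) ≤ Real.cos (ζ.arg * δ) := by
  have harg := abs_lt.1 (Complex.abs_arg_lt_pi_div_two_iff.2 (Or.inl hζre))
  have hπ := Real.pi_pos
  rw [← Real.cos_abs (ζ.arg * δ)]
  apply Real.cos_le_cos_of_nonneg_of_le_pi (abs_nonneg _)
  · nlinarith
  · rw [abs_mul, abs_of_pos hδ0]
    have h1 : |ζ.arg| ≤ Real.pi/2 := by rw [abs_le]; constructor <;> linarith
    nlinarith [abs_nonneg ζ.arg]

set_option maxHeartbeats 1000000 in
lemma key_facts {δ : ℝ} (hδ0 : 0 < δ) (hδ1 : δ < 1) {w : ℂ} (hw : ‖w‖ < 1) :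
    ‖lensMap δ w‖ < 1 ∧
    Real.cos (δ * (Real.pi/2)) / 4 * (1 - ‖w‖^2)^δ ≤ 1 - ‖lensMap δ w‖^2 := by
  have hπ := Real.pi_pos
  obtain ⟨ζ, hζdef⟩ : ∃ ζ : ℂ, ζ = ((1:ℂ)+w)/(1-w) := ⟨_, rfl⟩
  have hζre : 0 < ζ.re := by rw [hζdef]; exact sigma_re_pos hw
  have hζ0 : ζ ≠ 0 := ne_zero_of_re_pos hζre
  obtain ⟨r, hrdef⟩ : ∃ r : ℝ, r = ‖ζ‖ := ⟨_, rfl⟩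
  have hr : 0 < r := by rw [hrdef]; exact norm_pos_iff.2 hζ0
  obtain ⟨u, hudef⟩ : ∃ u : ℂ, u = ζ ^ (δ:ℂ) := ⟨_, rfl⟩
  have hτ : lensMap δ w = (u - 1)/(u + 1) := by
    simp only [hudef, hζdef, lensMap]
  have hcospos : 0 < Real.cos (δ*(Real.pi/2)) := cosδ_pos hδ0 hδ1
  have hcos1 : Real.cos (δ*(Real.pi/2)) ≤ Real.cos (ζ.arg * δ) := cos_le hδ0 hδ1 hζre
  have hrd : (0:ℝ) < r^δ := Real.rpow_pos_of_pos hr δ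
  have hure : u.re = r^δ * Real.cos (ζ.arg * δ) := by
    rw [hudef, hrdef]; exact cpow_re_eq hζ0 δ
  have hurepos : 0 < u.re := by rw [hudef]; exact u_re_pos hδ0 hδ1 hζre
  have hulb : r^δ * Real.cos (δ*(Real.pi/2)) ≤ u.re := by
    rw [hure]; exact mul_le_mul_of_nonneg_left hcos1 hrd.le
  have huabs : ‖u‖ = r^δ := by rw [hudef, hrdef]; exact cpow_abs_eq hζ0 δ
  have hu1 : u + 1 ≠ 0 := add_one_ne hurepos
  have hu1pos : (0:ℝ) < ‖u+1‖^2 := by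
    have := norm_pos_iff.2 hu1; positivity
  have hmob : 1 - ‖lensMap δ w‖^2 = 4 * u.re / ‖u+1‖^2 := by
    rw [hτ]; exact mobius_one_sub_sq hurepos
  have hlt : ‖lensMap δ w‖ < 1 := by
    have hpos : 0 < 4 * u.re / ‖u+1‖^2 := by positivity
    rw [← hmob] at hpos
    nlinarith [norm_nonneg (lensMap δ w)]
  refine ⟨hlt, ?_⟩
  have hA : (1:ℝ) ≤ (1+r^2)^δ := by
    calc (1:ℝ) = 1^δ := (Real.one_rpow δ).symm
      _ ≤ (1+r^2)^δ := Real.rpow_le_rpow zero_le_one (by nlinarith) hδ0.le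
  have hB : (r^δ)^2 ≤ (1+r^2)^δ := by
    have h1 : (r^δ)^2 = (r^2)^δ := by
      rw [← Real.rpow_natCast (r^δ) 2, ← Real.rpow_natCast r 2, ← Real.rpow_mul hr.le,
        ← Real.rpow_mul hr.le, mul_comm]
    rw [h1]
    exact Real.rpow_le_rpow (by positivity) (by nlinarith) hδ0.le
  have hub : ‖u+1‖^2 ≤ 4*(1+r^2)^δ := by
    have h1 : ‖u+1‖ ≤ r^δ + 1 := by
      calc ‖u+1‖ ≤ ‖u‖ + ‖(1:ℂ)‖ := norm_add_le _ _
        _ = r^δ + 1 := by rw [huabs]; norm_num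
    have h2 : ‖u+1‖^2 ≤ (r^δ+1)^2 := by nlinarith [norm_nonneg (u+1)]
    nlinarith [sq_nonneg (r^δ - 1)]
  have hlb : 1 + r^2 ≤ ‖ζ+1‖^2 := by
    simp only [hrdef, Complex.sq_norm, Complex.normSq_apply,
      Complex.add_re, Complex.add_im, Complex.one_re, Complex.one_im, add_zero]
    nlinarith [hζre]
  have hre_le : ζ.re ≤ r := by rw [hrdef]; exact Complex.re_le_norm ζ
  have hplus : ζ + 1 = 2/(1-w) := by
    rw [hζdef]; field_simp [one_sub_ne hw]; norm_num
  have hζ1sq : ‖ζ+1‖^2 = 4/‖1-w‖^2 := by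
    rw [hplus, norm_div, div_pow]
    norm_num
  have hnw : (0:ℝ) < ‖(1:ℂ)-w‖ := norm_pos_iff.2 (one_sub_ne hw)
  have hw2 : 1 - ‖w‖^2 = 4*ζ.re/‖ζ+1‖^2 := by
    rw [hζ1sq, hζdef, sigma_re hw]
    have habs : (0:ℝ) < ‖1-w‖ := hnw
    field_simp [habs.ne']
  have hup : 1 - ‖w‖^2 ≤ 4*r/(1+r^2) := by
    rw [hw2]
    exact div_le_div₀ (by positivity) (by linarith) (by positivity) hlb
  have hrpow1 : (1-‖w‖^2)^δ ≤ (4*r/(1+r^2))^δ :=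
    Real.rpow_le_rpow (by nlinarith [norm_nonneg w]) hup hδ0.le
  have hsplit : (4*r/(1+r^2))^δ = (4:ℝ)^δ * r^δ / (1+r^2)^δ := by
    rw [Real.div_rpow (by positivity) (by positivity), Real.mul_rpow (by norm_num) hr.le]
  have h4δ : (4:ℝ)^δ ≤ 4 := by
    calc (4:ℝ)^δ ≤ 4^(1:ℝ) := Real.rpow_le_rpow_of_exponent_le (by norm_num) hδ1.le
      _ = 4 := Real.rpow_one 4
  have hpowpos : (0:ℝ) < (1+r^2)^δ := Real.rpow_pos_of_pos (by positivity) δ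
  have hL : Real.cos (δ*(Real.pi/2))/4 * (1-‖w‖^2)^δ
      ≤ Real.cos (δ*(Real.pi/2)) * (r^δ/(1+r^2)^δ) := by
    calc Real.cos (δ*(Real.pi/2))/4 * (1-‖w‖^2)^δ
        ≤ Real.cos (δ*(Real.pi/2))/4 * ((4:ℝ)^δ * r^δ/(1+r^2)^δ) := by
          apply mul_le_mul_of_nonneg_left _ (by positivity)
          rw [← hsplit]; exact hrpow1
      _ ≤ Real.cos (δ*(Real.pi/2))/4 * (4 * r^δ/(1+r^2)^δ) := by
          apply mul_le_mul_of_nonneg_left _ (by positivity)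
          exact (div_le_div_iff_of_pos_right hpowpos).2 (mul_le_mul_of_nonneg_right h4δ hrd.le)
      _ = Real.cos (δ*(Real.pi/2)) * (r^δ/(1+r^2)^δ) := by
          ring
  have hR : Real.cos (δ*(Real.pi/2)) * (r^δ/(1+r^2)^δ) ≤ 1 - ‖lensMap δ w‖^2 := by
    rw [hmob]
    calc Real.cos (δ*(Real.pi/2)) * (r^δ/(1+r^2)^δ)
        = 4*(r^δ * Real.cos (δ*(Real.pi/2)))/(4*(1+r^2)^δ) := by
          ring
      _ ≤ 4*u.re/‖u+1‖^2 := div_le_div₀ (by linarith) (by linarith) hu1pos hub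
  calc Real.cos (δ * (Real.pi/2)) / 4 * (1 - ‖w‖^2)^δ
      ≤ Real.cos (δ*(Real.pi/2)) * (r^δ/(1+r^2)^δ) := hL
    _ ≤ 1 - ‖lensMap δ w‖^2 := hR

end LensAux

open LensAux in
/-- The lens map `τ_δ` is an injective holomorphic self-map of `𝔻`, and
`1 - |τ_δ(w)|² ≥ c (1-|w|²)^δ` on `𝔻` for some constant `c > 0`. -/
theorem lensMap_self_map_and_estimate
    (δ : ℝ) (hδ : δ ∈ Set.Ioo (0 : ℝ) 1) :
    (∀ w ∈ unitDisc, lensMap δ w ∈ unitDisc) ∧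
    Set.InjOn (lensMap δ) unitDisc ∧
    ∃ c > (0 : ℝ), ∀ w ∈ unitDisc,
      c * (1 - ‖w‖ ^ 2) ^ δ ≤ 1 - ‖lensMap δ w‖ ^ 2 := by
  obtain ⟨hδ0, hδ1⟩ := hδ
  refine ⟨fun w hw => (key_facts hδ0 hδ1 hw).1, ?_, ?_⟩
  · intro w₁ h₁ w₂ h₂ heq
    have hw₁ : ‖w₁‖ < 1 := h₁
    have hw₂ : ‖w₂‖ < 1 := h₂
    set ζ₁ := ((1:ℂ)+w₁)/(1-w₁) with hζ₁
    set ζ₂ := ((1:ℂ)+w₂)/(1-w₂) with hζ₂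
    have hr1 : 0 < ζ₁.re := sigma_re_pos hw₁
    have hr2 : 0 < ζ₂.re := sigma_re_pos hw₂
    have hu1 : 0 < (ζ₁ ^ (δ:ℂ)).re := u_re_pos hδ0 hδ1 hr1
    have hu2 : 0 < (ζ₂ ^ (δ:ℂ)).re := u_re_pos hδ0 hδ1 hr2
    have heq' : (ζ₁ ^ (δ:ℂ) - 1)/(ζ₁ ^ (δ:ℂ) + 1) = (ζ₂ ^ (δ:ℂ) - 1)/(ζ₂ ^ (δ:ℂ) + 1) := heq
    rw [div_eq_div_iff (add_one_ne hu1) (add_one_ne hu2)] at heq'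
    have huu : ζ₁ ^ (δ:ℂ) = ζ₂ ^ (δ:ℂ) := by linear_combination heq' / 2
    have hζζ : ζ₁ = ζ₂ := cpow_inj hδ0 hδ1 hr1 hr2 huu
    rw [hζ₁, hζ₂, div_eq_div_iff (one_sub_ne hw₁) (one_sub_ne hw₂)] at hζζ
    linear_combination hζζ / 2
  · exact ⟨Real.cos (δ * (Real.pi/2)) / 4,
      div_pos (cosδ_pos hδ0 hδ1) (by norm_num),
      fun w hw => (key_facts hδ0 hδ1 hw).2⟩


end
end
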